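/- arXiv:2303.09582 — 7 statements merged into one kernel-verified Lean document; each statement's English description precedes it below -/
import Mathlib

section
/- For all positive integers n and d, every exponent vector a : Fin (n+1) → ℕ with ∑ i, a i = 2d can be written as a = b + c where b, c : Fin (n+1) → ℕ satisfy ∑ i, b i = d, ∑ i, c i = d, |supp(b)| ≤ ⌈(n+2)/2⌉ and |supp(c)| ≤ ⌈(n+2)/2⌉. Consequently, any Ω ⊆ M_{n,d} containing all exponent vectors of degree d with support of size at most ⌈(n+2)/2⌉ spans a 2-normal space: every exponent vector of degree 2d is a sum of two elements of Ω. -/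
open MvPolynomial

/-- The size of the support of an exponent vector. -/
def suppCard {n : ℕ} (a : Fin (n + 1) → ℕ) : ℕ :=
  (Finset.univ.filter fun i => a i ≠ 0).card

/-- The toric ideal of a set `Ω` of exponent vectors: the kernel of the `K`-algebra map
sending the variable `w_a` (for `a ∈ Ω`) to the monomial with exponent vector `a`. -/
noncomputable def toricIdeal (K : Type*) [Field K] {n : ℕ}
    (Ω : Set (Fin (n + 1) → ℕ)) : Ideal (MvPolynomial Ω K) :=
  RingHom.ker
    (aeval (R := K) fun a : Ω => ∏ i, (X i : MvPolynomial (Fin (n + 1)) K) ^ (a.1 i))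

/-- `I(Ω)` is generated in degrees at most `k` (each variable `w_a` having degree 1). -/
def genInDegLE (K : Type*) [Field K] {n : ℕ} (Ω : Set (Fin (n + 1) → ℕ)) (k : ℕ) : Prop :=
  toricIdeal K Ω =
    Ideal.span {p : MvPolynomial Ω K | p ∈ toricIdeal K Ω ∧ ∃ m ≤ k, p.IsHomogeneous m}

/-- `I(Ω)` is generated by quadrics: it equals the ideal generated by its homogeneous
elements of degree 2. -/
def genByQuadrics (K : Type*) [Field K] {n : ℕ} (Ω : Set (Fin (n + 1) → ℕ)) : Prop :=
  toricIdeal K Ω =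
    Ideal.span {p : MvPolynomial Ω K | p ∈ toricIdeal K Ω ∧ p.IsHomogeneous 2}


namespace SplitAux

/-- Elements at even positions (0,2,4,...). -/
def evens {α : Type*} : List α → List α
  | [] => []
  | x :: t => x :: evens t.tail
termination_by l => l.length

/-- Elements at odd positions. -/
def odds {α : Type*} (l : List α) : List α := evens l.tail

@[simp] lemma evens_nil {α : Type*} : evens ([] : List α) = [] := by rw [evens]
@[simp] lemma odds_nil {α : Type*} : odds ([] : List α) = [] := by rw [odds]; simp
lemma evens_cons {α : Type*} (x : α) (t : List α) : evens (x :: t) = x :: odds t := by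
  rw [evens]; rfl
@[simp] lemma odds_cons {α : Type*} (x : α) (t : List α) : odds (x :: t) = evens t := rfl

lemma perm_evens_odds {α : Type*} : ∀ l : List α, (evens l ++ odds l).Perm l
  | [] => by simp
  | x :: t => by
    rw [evens_cons, odds_cons, List.cons_append]
    exact (List.perm_append_comm.trans (perm_evens_odds t)).cons x
termination_by l => l.length
decreasing_by all_goals (simp; try omega)

lemma evens_sublist {α : Type*} : ∀ l : List α, (evens l).Sublist l
  | [] => by simp
  | x :: t => by
    rw [evens_cons, odds]
    exact ((evens_sublist t.tail).trans (List.tail_sublist t)).cons₂ x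
termination_by l => l.length
decreasing_by all_goals (simp; try omega)

lemma odds_sublist {α : Type*} (l : List α) : (odds l).Sublist l :=
  (evens_sublist l.tail).trans (List.tail_sublist l)

lemma length_evens {α : Type*} : ∀ l : List α, (evens l).length = (l.length + 1) / 2
  | [] => by simp
  | [x] => by rw [evens_cons]; simp
  | x :: y :: t => by
    rw [evens_cons, odds_cons]
    have h := length_evens t
    simp only [List.length_cons, h]
    omega
termination_by l => l.length
decreasing_by all_goals (simp; try omega)

lemma length_odds {α : Type*} (l : List α) : (odds l).length = l.length / 2 := by
  cases l with
  | nil => simp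
  | cons x t => rw [odds_cons, length_evens]; simp

lemma evens_map {α β : Type*} (f : α → β) : ∀ l : List α, evens (l.map f) = (evens l).map f
  | [] => by simp
  | x :: t => by
    rw [List.map_cons, evens_cons, evens_cons, List.map_cons, odds, odds, ← List.map_tail,
      evens_map f t.tail]
termination_by l => l.length
decreasing_by all_goals (simp; try omega)

/-- For descending-sorted lists of naturals, the alternating sums are balanced. -/
lemma sum_evens_odds : ∀ l : List ℕ, l.Pairwise (fun x y => y ≤ x) →
    (odds l).sum ≤ (evens l).sum ∧ (evens l).sum ≤ (odds l).sum + l.headI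
  | [] => by simp
  | x :: t => by
    intro hs
    rw [List.pairwise_cons] at hs
    have IH := sum_evens_odds t hs.2
    rw [evens_cons, odds_cons, List.sum_cons, List.headI]
    constructor
    · -- (evens t).sum ≤ x + (odds t).sum
      rcases t with _ | ⟨y, t'⟩
      · simp
      · have hy : y ≤ x := hs.1 y (by simp)
        have := IH.2
        rw [List.headI] at this
        omega
    · omega
termination_by l => l.length
decreasing_by all_goals (simp; try omega)

lemma odds_map {α β : Type*} (f : α → β) (l : List α) : odds (l.map f) = (odds l).map f := by
  cases l with
  | nil => simp
  | cons x t => rw [List.map_cons, odds_cons, odds_cons, evens_map]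

end SplitAux

open SplitAux in
lemma split_lemma (n d : ℕ) (hd : 1 ≤ d) (a : Fin (n + 1) → ℕ) (ha : ∑ i, a i = 2 * d) :
    ∃ b c : Fin (n + 1) → ℕ, a = b + c ∧ (∑ i, b i = d) ∧ (∑ i, c i = d) ∧
      ((Finset.univ.filter fun i => b i ≠ 0).card ≤ (n + 3) / 2) ∧
      ((Finset.univ.filter fun i => c i ≠ 0).card ≤ (n + 3) / 2) := by
  classical
  set S : Finset (Fin (n + 1)) := Finset.univ.filter (fun i => a i ≠ 0) with hS
  have hsum_S : ∑ i ∈ S, a i = 2 * d := by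
    rw [← ha]
    exact Finset.sum_subset (Finset.filter_subset _ _)
      (fun x _ hx => by simpa [hS] using hx)
  set r : Fin (n + 1) → Fin (n + 1) → Prop := fun i j => a j ≤ a i with hr
  haveI : DecidableRel r := fun i j => Nat.decLe _ _
  haveI : IsTotal (Fin (n + 1)) r := ⟨fun i j => le_total (a j) (a i)⟩
  haveI : IsTrans (Fin (n + 1)) r := ⟨fun i j k hij hjk => le_trans hjk hij⟩
  set L : List (Fin (n + 1)) := List.insertionSort r S.toList with hL
  have hperm : L.Perm S.toList := List.perm_insertionSort r _
  have hsortL : L.Pairwise r := List.pairwise_insertionSort r _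
  have hnodup : L.Nodup := hperm.nodup_iff.mpr S.nodup_toList
  have hmemL : ∀ i, i ∈ L ↔ i ∈ S := fun i => by rw [hperm.mem_iff, Finset.mem_toList]
  have hlen : L.length = S.card := by rw [hperm.length_eq, Finset.length_toList]
  have hScard : S.card ≤ n + 1 := by
    have := Finset.card_le_univ S
    simpa using this
  -- L is nonempty
  obtain ⟨j₁, T, hLT⟩ : ∃ j t, L = j :: t := by
    rcases L with _ | ⟨j, t⟩
    · exfalso
      have : S.card = 0 := by rw [← hlen]; rfl
      rw [Finset.card_eq_zero] at this
      rw [this, Finset.sum_empty] at hsum_S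
      omega
    · exact ⟨j, t, rfl⟩
  -- sums over the even/odd position parts
  set sE : ℕ := ((evens L).map a).sum with hsE
  set sO : ℕ := ((odds L).map a).sum with hsO
  have hsortv : (L.map a).Pairwise (fun x y => y ≤ x) := List.pairwise_map.mpr hsortL
  have key := sum_evens_odds (L.map a) hsortv
  rw [evens_map, odds_map, ← hsE, ← hsO] at key
  have hheadI : (L.map a).headI = a j₁ := by rw [hLT]; rfl
  rw [hheadI] at key
  have hLsum : (L.map a).sum = 2 * d := by
    have h1 : ((evens L ++ odds L).map a).Perm (L.map a) := (perm_evens_odds L).map a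
    have h2 : L.toFinset = S := by
      ext i; rw [List.mem_toFinset, hmemL]
    calc (L.map a).sum = L.toFinset.sum a := (List.sum_toFinset a hnodup).symm
      _ = ∑ i ∈ S, a i := by rw [h2]
      _ = 2 * d := hsum_S
  have hEO : sE + sO = 2 * d := by
    have h1 : ((evens L ++ odds L).map a).Perm (L.map a) := (perm_evens_odds L).map a
    have := h1.sum_eq
    rw [List.map_append, List.sum_append] at this
    rw [hsE, hsO, this, hLsum]
  have hEd : d ≤ sE := by omega
  set e : ℕ := sE - d with he
  have he_le : e ≤ a j₁ := by omega
  -- the splitting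
  set b : Fin (n + 1) → ℕ :=
    fun i => if i = j₁ then a j₁ - e else if i ∈ evens L then a i else 0 with hb
  set c : Fin (n + 1) → ℕ := fun i => a i - b i with hc
  have hble : ∀ i, b i ≤ a i := by
    intro i
    simp only [hb]
    split_ifs with h1 h2
    · subst h1; exact Nat.sub_le _ _
    · exact le_refl _
    · exact Nat.zero_le _
  have habc : a = b + c := by
    funext i
    have := hble i
    simp only [Pi.add_apply, hc]
    omega
  have hj1E : j₁ ∈ evens L := by rw [hLT, evens_cons]; exact List.mem_cons_self ..
  set B : Finset (Fin (n + 1)) := (evens L).toFinset with hB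
  have hj1B : j₁ ∈ B := List.mem_toFinset.mpr hj1E
  have hEnodup : (evens L).Nodup := (evens_sublist L).nodup hnodup
  have hBsum : ∑ i ∈ B, a i = sE := List.sum_toFinset a hEnodup
  have hbzero : ∀ i, i ∉ B → b i = 0 := by
    intro i hi
    have h1 : i ≠ j₁ := fun h => hi (h ▸ hj1B)
    have h2 : i ∉ evens L := fun h => hi (List.mem_toFinset.mpr h)
    simp only [hb]; simp [h1, h2]
  have hsum_b : ∑ i, b i = d := by
    have h0 : ∑ i, b i = ∑ i ∈ B, b i :=
      (Finset.sum_subset (Finset.subset_univ B) (fun x _ hx => hbzero x hx)).symm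
    have h1 : ∑ i ∈ B, b i = b j₁ + ∑ i ∈ B.erase j₁, b i :=
      (Finset.add_sum_erase B b hj1B).symm
    have h2 : ∑ i ∈ B, a i = a j₁ + ∑ i ∈ B.erase j₁, a i :=
      (Finset.add_sum_erase B a hj1B).symm
    have h3 : ∑ i ∈ B.erase j₁, b i = ∑ i ∈ B.erase j₁, a i := by
      apply Finset.sum_congr rfl
      intro i hi
      have hi1 : i ≠ j₁ := Finset.ne_of_mem_erase hi
      have hi2 : i ∈ evens L := List.mem_toFinset.mp (Finset.mem_of_mem_erase hi)
      simp only [hb]; simp [hi1, hi2]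
    have h4 : b j₁ = a j₁ - e := by simp only [hb]; simp
    omega
  have hsum_c : ∑ i, c i = d := by
    have h0 : ∑ i, (b i + c i) = ∑ i, b i + ∑ i, c i := Finset.sum_add_distrib
    have h1 : ∑ i, a i = ∑ i, (b i + c i) := by
      apply Finset.sum_congr rfl
      intro i _
      rw [habc]; rfl
    omega
  refine ⟨b, c, habc, hsum_b, hsum_c, ?_, ?_⟩
  · -- support of b
    have hsub : (Finset.univ.filter fun i => b i ≠ 0) ⊆ B := by
      intro i hi
      rw [Finset.mem_filter] at hi
      by_contra h
      exact hi.2 (hbzero i h)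
    have h1 : B.card ≤ (evens L).length := (evens L).toFinset_card_le
    have h2 : (evens L).length = (L.length + 1) / 2 := length_evens L
    have h3 := Finset.card_le_card hsub
    omega
  · -- support of c
    have hsub : (Finset.univ.filter fun i => c i ≠ 0) ⊆ (odds L).toFinset ∪ {j₁} := by
      intro i hi
      rw [Finset.mem_filter] at hi
      have hai : a i ≠ 0 := by
        intro h
        apply hi.2
        have := hble i
        simp only [hc]
        omega
      have hiL : i ∈ L := (hmemL i).mpr (by rw [hS]; simp [hai])
      have hiEO : i ∈ evens L ∨ i ∈ odds L := by
        have := (perm_evens_odds L).mem_iff (a := i)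
        rw [List.mem_append] at this
        exact this.mpr hiL
      rcases hiEO with hE | hO
      · by_cases hij : i = j₁
        · subst hij
          exact Finset.mem_union_right _ (Finset.mem_singleton_self _)
        · exfalso
          apply hi.2
          have : b i = a i := by simp only [hb]; simp [hij, hE]
          simp only [hc, this]
          omega
      · exact Finset.mem_union_left _ (List.mem_toFinset.mpr hO)
    have h1 := Finset.card_le_card hsub
    have h2 := Finset.card_union_le ((odds L).toFinset) ({j₁} : Finset (Fin (n + 1)))
    have h3 : (odds L).toFinset.card ≤ (odds L).length := (odds L).toFinset_card_le
    have h4 : (odds L).length = L.length / 2 := length_odds L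
    have h5 : ({j₁} : Finset (Fin (n + 1))).card = 1 := Finset.card_singleton _
    omega

/-- every exponent vector of degree `2d` splits as a sum of two exponent
vectors of degree `d` each supported in at most `⌈(n+2)/2⌉ = (n+3)/2` variables; hence any
`Ω ⊆ M_{n,d}` containing all such vectors spans a 2-normal space. -/
theorem stmt1 (n d : ℕ) (hn : 1 ≤ n) (hd : 1 ≤ d) :
    (∀ a : Fin (n + 1) → ℕ, ∑ i, a i = 2 * d →
      ∃ b c : Fin (n + 1) → ℕ, a = b + c ∧ (∑ i, b i = d) ∧ (∑ i, c i = d) ∧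
        suppCard b ≤ (n + 3) / 2 ∧ suppCard c ≤ (n + 3) / 2) ∧
    (∀ Ω : Set (Fin (n + 1) → ℕ),
      {a : Fin (n + 1) → ℕ | (∑ i, a i = d) ∧ suppCard a ≤ (n + 3) / 2} ⊆ Ω →
      ∀ a : Fin (n + 1) → ℕ, ∑ i, a i = 2 * d → ∃ b ∈ Ω, ∃ c ∈ Ω, a = b + c) := by
  have main : ∀ a : Fin (n + 1) → ℕ, ∑ i, a i = 2 * d →
      ∃ b c : Fin (n + 1) → ℕ, a = b + c ∧ (∑ i, b i = d) ∧ (∑ i, c i = d) ∧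
        suppCard b ≤ (n + 3) / 2 ∧ suppCard c ≤ (n + 3) / 2 := by
    intro a ha
    obtain ⟨b, c, h1, h2, h3, h4, h5⟩ := split_lemma n d hd a ha
    exact ⟨b, c, h1, h2, h3, h4, h5⟩
  refine ⟨main, ?_⟩
  intro Ω hΩ a ha
  obtain ⟨b, c, h1, h2, h3, h4, h5⟩ := main a ha
  exact ⟨b, hΩ ⟨h2, h4⟩, c, hΩ ⟨h3, h5⟩, h1⟩
end

section
/- Let n, d be positive integers and Ω ⊆ M_{n,d} a set of exponent vectors such that every exponent vector a : Fin (n+1) → ℕ with ∑ i, a i = 2d is a sum of two elements of Ω (i.e. Ω spans a 2-normal space). Then for every integer t ≥ 2, every exponent vector a with ∑ i, a i = t·d is a sum of t elements of Ω (equivalently, the degree-t graded component of the monomial algebra K[Ω] equals the full space of forms of degree t·d, so the Hilbert function equals C(n + t·d, n) for all t ≥ 2). -/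
open MvPolynomial

lemma exists_le_of_sum_ge {n : ℕ} (m : ℕ) :
    ∀ a : Fin (n + 1) → ℕ, m ≤ ∑ i, a i →
      ∃ c : Fin (n + 1) → ℕ, (∀ i, c i ≤ a i) ∧ ∑ i, c i = m := by
  induction m with
  | zero => exact fun a _ => ⟨0, fun i => Nat.zero_le _, by simp⟩
  | succ m ih =>
    intro a hm
    obtain ⟨c, hc, hcs⟩ := ih a (le_trans (Nat.le_succ m) hm)
    have : ∃ i, c i < a i := by
      by_contra h
      push_neg at h
      have : ∑ i, a i ≤ ∑ i, c i := Finset.sum_le_sum fun i _ => h i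
      omega
    obtain ⟨i, hi⟩ := this
    refine ⟨Function.update c i (c i + 1), fun j => ?_, ?_⟩
    · rcases eq_or_ne j i with rfl | h
      · simpa using hi
      · simp [Function.update_of_ne h, hc j]
    · rw [Finset.sum_update_of_mem (Finset.mem_univ i)]
      have h2 := Finset.add_sum_erase Finset.univ c (Finset.mem_univ i)
      rw [Finset.erase_eq] at h2
      omega

/-- if `Ω ⊆ M_{n,d}` spans a 2-normal space (every exponent vector of degree
`2d` is a sum of two elements of `Ω`), then for every `t ≥ 2` every exponent vector of
degree `t·d` is a sum of `t` elements of `Ω`. -/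
theorem stmt3 (n d : ℕ) (hn : 1 ≤ n) (hd : 1 ≤ d)
    (Ω : Set (Fin (n + 1) → ℕ)) (hΩsub : Ω ⊆ {a | ∑ i, a i = d})
    (h2 : ∀ a : Fin (n + 1) → ℕ, ∑ i, a i = 2 * d → ∃ b ∈ Ω, ∃ c ∈ Ω, a = b + c) :
    ∀ t : ℕ, 2 ≤ t → ∀ a : Fin (n + 1) → ℕ, ∑ i, a i = t * d →
      ∃ f : Fin t → (Fin (n + 1) → ℕ), (∀ j, f j ∈ Ω) ∧ a = ∑ j, f j := by
  intro t ht
  induction t, ht using Nat.le_induction with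
  | base =>
    intro a ha
    obtain ⟨b, hb, c, hc, habc⟩ := h2 a ha
    refine ⟨![b, c], ?_, ?_⟩
    · intro j; fin_cases j <;> simpa
    · rw [Fin.sum_univ_two]; simpa using habc
  | succ t ht ih =>
    intro a ha
    have h2d : 2 * d ≤ ∑ i, a i := by
      rw [ha]; exact Nat.mul_le_mul_right d (by omega)
    obtain ⟨c, hc, hcs⟩ := exists_le_of_sum_ge (2 * d) a h2d
    obtain ⟨b1, hb1, b2, hb2, hcb⟩ := h2 c hcs
    have hb1d : ∑ i, b1 i = d := hΩsub hb1
    have hb1le : ∀ i, b1 i ≤ a i := fun i =>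
      le_trans (by rw [hcb]; exact Nat.le_add_right _ _) (hc i)
    set a' : Fin (n + 1) → ℕ := fun i => a i - b1 i with ha'
    have ha's : ∑ i, a' i = t * d := by
      have : ∑ i, a' i = ∑ i, a i - ∑ i, b1 i := by
        simp only [ha']
        exact Finset.sum_tsub_distrib Finset.univ fun i _ => hb1le i
      rw [this, ha, hb1d]
      have : 2 ≤ t + 1 := by omega
      cases t with
      | zero => omega
      | succ k => ring_nf; omega
    obtain ⟨g, hg, hga⟩ := ih a' ha's
    refine ⟨Fin.cons b1 g, ?_, ?_⟩
    · intro j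
      refine Fin.cases ?_ ?_ j
      · simpa using hb1
      · intro k; simpa using hg k
    · rw [Fin.sum_cons, ← hga]
      funext i
      have := hb1le i
      simp [ha']
      omega
end

section
/- Let Ω ⊆ M_{n,d} be a set of exponent vectors such that every exponent vector a : Fin (n+1) → ℕ with ∑ i, a i = 2d is a sum of two elements of Ω (i.e. Ω spans a 2-normal space). Then the toric ideal I(Ω) is generated in degrees ≤ 3, i.e. I(Ω) equals the ideal generated by its homogeneous elements of degree at most 3. -/
open MvPolynomial

namespace Stmt5Aux

variable {n d : ℕ} {Ω : Set (Fin (n + 1) → ℕ)}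

/-- total degree of an exponent vector -/
def tdeg {n : ℕ} (v : Fin (n + 1) → ℕ) : ℕ := ∑ i, v i

/-- sum of a multiset of elements of Ω as an exponent vector -/
def msum (C : Multiset Ω) : Fin (n + 1) → ℕ := fun i => (C.map fun a => a.1 i).sum

@[simp] lemma msum_zero : msum (0 : Multiset Ω) = 0 := by
  funext i; simp [msum]

@[simp] lemma msum_cons (a : Ω) (C : Multiset Ω) : msum (a ::ₘ C) = a.1 + msum C := by
  funext i; simp [msum]

@[simp] lemma msum_add (C D : Multiset Ω) : msum (C + D) = msum C + msum D := by
  funext i; simp [msum]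

lemma tdeg_add (v w : Fin (n + 1) → ℕ) : tdeg (v + w) = tdeg v + tdeg w := by
  simp [tdeg, Finset.sum_add_distrib]

lemma tdeg_msum (hΩsub : Ω ⊆ {a | ∑ i, a i = d}) (C : Multiset Ω) :
    tdeg (msum C) = C.card * d := by
  induction C using Multiset.induction with
  | empty => simp [tdeg]
  | cons a C ih =>
    rw [msum_cons, tdeg_add, ih]
    have : tdeg a.1 = d := hΩsub a.2
    rw [this, Multiset.card_cons]
    ring

lemma tdeg_sub {v w : Fin (n + 1) → ℕ} (h : w ≤ v) : tdeg (v - w) = tdeg v - tdeg w := by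
  have h1 : tdeg (v - w) + tdeg w = tdeg v := by
    rw [tdeg, tdeg, tdeg, ← Finset.sum_add_distrib]
    refine Finset.sum_congr rfl fun i _ => ?_
    have hi : w i ≤ v i := h i
    simp only [Pi.sub_apply]
    omega
  omega

lemma tdeg_le_tdeg {v w : Fin (n + 1) → ℕ} (h : v ≤ w) : tdeg v ≤ tdeg w :=
  Finset.sum_le_sum fun i _ => h i

lemma exists_sub_tdeg (w : Fin (n + 1) → ℕ) {k : ℕ} (h : k ≤ tdeg w) :
    ∃ u, u ≤ w ∧ tdeg u = k := by
  induction k with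
  | zero => exact ⟨0, fun i => Nat.zero_le _, by simp [tdeg]⟩
  | succ k ih =>
    obtain ⟨u, hu, hk⟩ := ih (Nat.le_of_succ_le h)
    have hex : ∃ i, u i < w i := by
      by_contra hc
      push_neg at hc
      have : tdeg w ≤ tdeg u := Finset.sum_le_sum fun i _ => hc i
      omega
    obtain ⟨i, hi⟩ := hex
    refine ⟨Function.update u i (u i + 1), fun j => ?_, ?_⟩
    · rcases eq_or_ne j i with rfl | hj
      · simpa using hi
      · simp only [Function.update_of_ne hj]; exact hu j
    · rw [tdeg, Finset.sum_update_of_mem (Finset.mem_univ i), ← Finset.erase_eq]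
      have h2 : ∑ j, u j = u i + ∑ j ∈ Finset.univ.erase i, u j :=
        (Finset.add_sum_erase _ _ (Finset.mem_univ i)).symm
      rw [tdeg] at hk
      omega

/-- One rewriting step: replace a sub-multiset of size ≤ 3 by another with the same sum. -/
def Step (Ω : Set (Fin (n + 1) → ℕ)) (C C' : Multiset Ω) : Prop :=
  ∃ D E E' : Multiset Ω, C = E + D ∧ C' = E' + D ∧ E.card ≤ 3 ∧ E.card = E'.card ∧
    msum E = msum E'

abbrev Rel (Ω : Set (Fin (n + 1) → ℕ)) : Multiset Ω → Multiset Ω → Prop :=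
  Relation.ReflTransGen (Step Ω)

lemma Step.card_eq {C C' : Multiset Ω} (h : Step Ω C C') : C.card = C'.card := by
  obtain ⟨D, E, E', rfl, rfl, _, hc, _⟩ := h
  simp [hc]

lemma Step.msum_eq {C C' : Multiset Ω} (h : Step Ω C C') : msum C = msum C' := by
  obtain ⟨D, E, E', rfl, rfl, _, _, hs⟩ := h
  simp [hs]

lemma Rel.card_eq {C C' : Multiset Ω} (h : Rel Ω C C') : C.card = C'.card := by
  induction h with
  | refl => rfl
  | tail _ h ih => exact ih.trans h.card_eq

lemma Rel.msum_eq {C C' : Multiset Ω} (h : Rel Ω C C') : msum C = msum C' := by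
  induction h with
  | refl => rfl
  | tail _ h ih => exact ih.trans h.msum_eq

lemma Step.cons {C C' : Multiset Ω} (a : Ω) (h : Step Ω C C') :
    Step Ω (a ::ₘ C) (a ::ₘ C') := by
  obtain ⟨D, E, E', rfl, rfl, h1, h2, h3⟩ := h
  exact ⟨a ::ₘ D, E, E', by simp [Multiset.add_cons], by simp [Multiset.add_cons], h1, h2, h3⟩

lemma Rel.cons {C C' : Multiset Ω} (a : Ω) (h : Rel Ω C C') :
    Rel Ω (a ::ₘ C) (a ::ₘ C') := by
  induction h with
  | refl => exact .refl
  | tail _ h ih => exact ih.tail (h.cons a)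

lemma step_triple {x y z p q r : Ω} (D : Multiset Ω)
    (h : x.1 + y.1 + z.1 = p.1 + q.1 + r.1) :
    Step Ω (x ::ₘ y ::ₘ z ::ₘ D) (p ::ₘ q ::ₘ r ::ₘ D) := by
  refine ⟨D, {x, y, z}, {p, q, r}, by simp [Multiset.insert_eq_cons, Multiset.cons_add], by
    simp [Multiset.insert_eq_cons, Multiset.cons_add], by simp, by simp, ?_⟩
  funext i
  have := congrFun h i
  simp only [Multiset.insert_eq_cons, ← Multiset.cons_zero, msum_cons, msum_zero] at *
  simp only [Pi.add_apply, Pi.zero_apply] at *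
  omega



section Moves

variable (hΩ : Ω ⊆ {a | ∑ i, a i = d})
variable (H2 : ∀ v : Fin (n + 1) → ℕ, tdeg v = 2 * d → ∃ p q : Ω, v = p.1 + q.1)
variable (hd : 1 ≤ d)

lemma tdeg_mem (a : Ω) (hΩ : Ω ⊆ {a | ∑ i, a i = d}) : tdeg a.1 = d := hΩ a.2

include hΩ H2 hd in
lemma triple_split (x y z : Ω) (t : Fin (n + 1) → ℕ)
    (ht : t ≤ x.1 + y.1 + z.1) (htd : tdeg t ≤ d) :
    ∃ p q r : Ω, x.1 + y.1 + z.1 = p.1 + q.1 + r.1 ∧ t ≤ q.1 + r.1 := by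
  set S := x.1 + y.1 + z.1 with hS
  have htS : tdeg S = 3 * d := by
    rw [hS, tdeg_add, tdeg_add, tdeg_mem x hΩ, tdeg_mem y hΩ, tdeg_mem z hΩ]; ring
  have hw : tdeg (S - t) = 3 * d - tdeg t := by rw [tdeg_sub ht, htS]
  obtain ⟨u, huw, hu⟩ := exists_sub_tdeg (S - t) (show 2 * d ≤ tdeg (S - t) by omega)
  obtain ⟨p, p', hpu⟩ := H2 u hu
  have hpS : p.1 ≤ S := by
    rw [Pi.le_def]
    intro i
    have h1 : u i ≤ S i - t i := huw i
    have h2 : u i = p.1 i + p'.1 i := congrFun hpu i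
    have h3 : t i ≤ S i := ht i
    omega
  obtain ⟨q, r, hqr⟩ := H2 (S - p.1) (by rw [tdeg_sub hpS, htS, tdeg_mem p hΩ]; omega)
  refine ⟨p, q, r, ?_, ?_⟩
  · funext i
    have h1 : S i - p.1 i = q.1 i + r.1 i := congrFun hqr i
    have h2 : p.1 i ≤ S i := hpS i
    simp only [Pi.add_apply]
    omega
  · rw [Pi.le_def]
    intro i
    have h1 : S i - p.1 i = q.1 i + r.1 i := congrFun hqr i
    have h2 : u i ≤ S i - t i := huw i
    have h3 : u i = p.1 i + p'.1 i := congrFun hpu i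
    have h4 : t i ≤ S i := ht i
    simp only [Pi.add_apply]
    omega

include hΩ H2 hd in
lemma extract_from_triple (x y z b : Ω) (hb : b.1 ≤ x.1 + y.1 + z.1) :
    ∃ q r : Ω, x.1 + y.1 + z.1 = b.1 + q.1 + r.1 := by
  set S := x.1 + y.1 + z.1 with hS
  have htS : tdeg S = 3 * d := by
    rw [hS, tdeg_add, tdeg_add, tdeg_mem x hΩ, tdeg_mem y hΩ, tdeg_mem z hΩ]; ring
  obtain ⟨q, r, hqr⟩ := H2 (S - b.1) (by rw [tdeg_sub hb, htS, tdeg_mem b hΩ]; omega)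
  refine ⟨q, r, ?_⟩
  funext i
  have h1 : S i - b.1 i = q.1 i + r.1 i := congrFun hqr i
  have h2 : b.1 i ≤ S i := hb i
  simp only [Pi.add_apply]
  omega

include hΩ H2 hd in
lemma pairExtract : ∀ (k : ℕ) (C : Multiset Ω), C.card = k + 2 →
    ∀ t : Fin (n + 1) → ℕ, tdeg t ≤ d → t ≤ msum C →
    ∃ (q1 q2 : Ω) (D : Multiset Ω), Rel Ω C (q1 ::ₘ q2 ::ₘ D) ∧ t ≤ q1.1 + q2.1 := by
  intro k
  induction k with
  | zero =>
    intro C hC t htd ht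
    obtain ⟨a, b, rfl⟩ := Multiset.card_eq_two.mp hC
    refine ⟨a, b, 0, Relation.ReflTransGen.refl, ?_⟩
    rw [Pi.le_def]
    intro i
    have h1 : t i ≤ msum {a, b} i := ht i
    have h2 : msum ({a, b} : Multiset Ω) = a.1 + msum {b} := by
      rw [Multiset.insert_eq_cons, msum_cons]
    have h3 : msum ({b} : Multiset Ω) = b.1 + msum (0 : Multiset Ω) := by
      rw [← Multiset.cons_zero, msum_cons]
    rw [h2, h3] at h1
    simp only [msum_zero, Pi.add_apply, Pi.zero_apply] at h1
    simpa using h1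
  | succ k ih =>
    intro C hC t htd ht
    obtain ⟨x, hx⟩ := Multiset.card_pos_iff_exists_mem.mp (show 0 < C.card by omega)
    set C' := C.erase x with hC'def
    have hCx : C = x ::ₘ C' := (Multiset.cons_erase hx).symm
    have hcard : C'.card = k + 2 := by
      have := congrArg Multiset.card hCx
      rw [Multiset.card_cons] at this
      omega
    set t' : Fin (n + 1) → ℕ := fun i => min (t i) (msum C' i) with ht'def
    have ht'd : tdeg t' ≤ d := by
      refine le_trans ?_ htd
      exact Finset.sum_le_sum fun i _ => min_le_left _ _
    have ht' : t' ≤ msum C' := by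
      rw [Pi.le_def]; intro i; exact min_le_right _ _
    obtain ⟨q1, q2, D, hrel, htq⟩ := ih C' hcard t' ht'd ht'
    have hrel2 : Rel Ω C (x ::ₘ q1 ::ₘ q2 ::ₘ D) := hCx ▸ hrel.cons x
    have htx : t ≤ x.1 + q1.1 + q2.1 := by
      rw [Pi.le_def]
      intro i
      have h1 : t i ≤ msum C i := ht i
      have h2 : msum C i = x.1 i + msum C' i := by rw [hCx, msum_cons]; rfl
      have h3 : t' i ≤ q1.1 i + q2.1 i := by
        have := htq i
        simpa using this
      have h4 : t' i = min (t i) (msum C' i) := rfl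
      simp only [Pi.add_apply]
      omega
    obtain ⟨p, q, r, hsum, htqr⟩ := triple_split hΩ H2 hd x q1 q2 t htx htd
    refine ⟨q, r, p ::ₘ D, ?_, htqr⟩
    have hstep : Step Ω (x ::ₘ q1 ::ₘ q2 ::ₘ D) (p ::ₘ q ::ₘ r ::ₘ D) := step_triple D hsum
    have heq : p ::ₘ q ::ₘ r ::ₘ D = q ::ₘ r ::ₘ p ::ₘ D := by
      rw [Multiset.cons_swap p q, Multiset.cons_swap p r]
    exact hrel2.tail (heq ▸ hstep)

include hΩ H2 hd in
lemma extract (C : Multiset Ω) (hC : 3 ≤ C.card) (b : Ω) (hb : b.1 ≤ msum C) :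
    ∃ D : Multiset Ω, Rel Ω C (b ::ₘ D) := by
  obtain ⟨q1, q2, D, hrel, hbq⟩ :=
    pairExtract hΩ H2 hd (C.card - 2) C (by omega) b.1 (le_of_eq (tdeg_mem b hΩ)) hb
  have hcard := hrel.card_eq
  simp only [Multiset.card_cons] at hcard
  obtain ⟨z, hz⟩ := Multiset.card_pos_iff_exists_mem.mp (show 0 < D.card by omega)
  have hDz : D = z ::ₘ D.erase z := (Multiset.cons_erase hz).symm
  have hb3 : b.1 ≤ q1.1 + q2.1 + z.1 := by
    rw [Pi.le_def]
    intro i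
    have h1 : b.1 i ≤ q1.1 i + q2.1 i := by have := hbq i; simpa using this
    simp only [Pi.add_apply]
    omega
  obtain ⟨q, r, hsum⟩ := extract_from_triple hΩ H2 hd q1 q2 z b hb3
  refine ⟨q ::ₘ r ::ₘ D.erase z, ?_⟩
  have hstep : Step Ω (q1 ::ₘ q2 ::ₘ z ::ₘ D.erase z) (b ::ₘ q ::ₘ r ::ₘ D.erase z) :=
    step_triple (D.erase z) hsum
  have hrel2 : Rel Ω C (q1 ::ₘ q2 ::ₘ z ::ₘ D.erase z) := by rw [← hDz]; exact hrel
  exact hrel2.tail hstep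

include hΩ H2 hd in
lemma conn : ∀ (m : ℕ) (C C' : Multiset Ω), C.card = m → C'.card = m →
    msum C = msum C' → Rel Ω C C' := by
  intro m
  induction m using Nat.strong_induction_on with
  | _ m ih =>
    intro C C' hc hc' hs
    by_cases hm : m ≤ 3
    · refine Relation.ReflTransGen.single ⟨0, C, C', (add_zero C).symm, (add_zero C').symm,
        by omega, by omega, hs⟩
    · push_neg at hm
      obtain ⟨b, hb⟩ := Multiset.card_pos_iff_exists_mem.mp (show 0 < C'.card by omega)
      have hC'b : C' = b ::ₘ C'.erase b := (Multiset.cons_erase hb).symm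
      have hbC : b.1 ≤ msum C := by
        rw [hs, hC'b, msum_cons, Pi.le_def]
        intro i
        simp only [Pi.add_apply]
        omega
      obtain ⟨D, hrel⟩ := extract hΩ H2 hd C (by omega) b hbC
      have hcd : D.card = m - 1 := by
        have := hrel.card_eq
        rw [Multiset.card_cons] at this
        omega
      have hcd' : (C'.erase b).card = m - 1 := by
        have := congrArg Multiset.card hC'b
        rw [Multiset.card_cons] at this
        omega
      have hms : msum D = msum (C'.erase b) := by
        have h1 := hrel.msum_eq
        rw [msum_cons] at h1
        rw [hC'b, msum_cons] at hs
        funext i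
        have h2 : b.1 i + msum D i = msum C i := (congrFun h1 i).symm
        have h3 : msum C i = b.1 i + msum (C'.erase b) i := congrFun hs i
        omega
      have hrec : Rel Ω D (C'.erase b) := ih (m - 1) (by omega) D (C'.erase b) hcd hcd' hms
      rw [hC'b]
      exact hrel.trans (hrec.cons b)

end Moves

section Algebra

variable (K : Type*) [Field K]

/-- the monomial map -/
noncomputable abbrev phi (Ω : Set (Fin (n + 1) → ℕ)) :
    MvPolynomial Ω K →ₐ[K] MvPolynomial (Fin (n + 1)) K :=
  aeval (R := K) fun a : Ω => ∏ i, (X i : MvPolynomial (Fin (n + 1)) K) ^ (a.1 i)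

/-- the monomial in `MvPolynomial Ω K` associated to a multiset -/
noncomputable def mon (C : Multiset Ω) : MvPolynomial Ω K := (C.map X).prod

@[simp] lemma mon_zero : mon K (0 : Multiset Ω) = 1 := by simp [mon]

@[simp] lemma mon_cons (a : Ω) (C : Multiset Ω) :
    mon K (a ::ₘ C) = X a * mon K C := by simp [mon]

lemma mon_add (C D : Multiset Ω) : mon K (C + D) = mon K C * mon K D := by
  simp [mon, Multiset.prod_add]

lemma phi_mon (C : Multiset Ω) :
    phi K Ω (mon K C) = ∏ i, (X i : MvPolynomial (Fin (n + 1)) K) ^ (msum C i) := by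
  induction C using Multiset.induction with
  | empty => simp
  | cons a C ih =>
    rw [mon_cons, map_mul, ih, aeval_X, msum_cons]
    rw [← Finset.prod_mul_distrib]
    refine Finset.prod_congr rfl fun i _ => ?_
    rw [Pi.add_apply, pow_add]

lemma prod_X_pow_univ (v : Fin (n + 1) → ℕ) :
    (∏ i, (X i : MvPolynomial (Fin (n + 1)) K) ^ (v i)) =
      monomial (Finsupp.equivFunOnFinite.symm v) 1 := by
  classical
  set s : Fin (n + 1) →₀ ℕ := Finsupp.equivFunOnFinite.symm v with hs
  have hsv : ∀ i, s i = v i := fun i => rfl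
  rw [← prod_X_pow_eq_monomial]
  refine (Finset.prod_subset (Finset.subset_univ s.support) fun i _ hi => ?_).symm.trans ?_
  · have : s i = 0 := Finsupp.notMem_support_iff.mp hi
    rw [hsv] at this
    rw [this, pow_zero]
  · exact Finset.prod_congr rfl fun i _ => by rw [hsv]

/-- the exponent of the image of a monomial -/
noncomputable def expF (α : Ω →₀ ℕ) : Fin (n + 1) →₀ ℕ :=
  Finsupp.equivFunOnFinite.symm (msum (Finsupp.toMultiset α))

lemma mon_eq_monomial [DecidableEq Ω] (C : Multiset Ω) :
    mon K C = monomial C.toFinsupp (1 : K) := by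
  induction C using Multiset.induction with
  | empty => simp [monomial_zero']
  | cons a C ih =>
    rw [mon_cons, ih]
    have hX : (X a : MvPolynomial Ω K) = monomial (Finsupp.single a 1) 1 := by
      rw [← C_mul_X_eq_monomial, map_one, one_mul]
    rw [hX, monomial_mul, one_mul]
    congr 1
    rw [← Multiset.singleton_add, Multiset.toFinsupp_add, Multiset.toFinsupp_singleton]

lemma phi_monomial [DecidableEq Ω] (α : Ω →₀ ℕ) (c : K) :
    phi K Ω (monomial α c) = monomial (expF α) c := by
  have h1 : (monomial α c : MvPolynomial Ω K) = C c * monomial α 1 := by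
    rw [C_mul_monomial, mul_one]
  have h2 : (monomial α (1 : K)) = mon K (Finsupp.toMultiset α) := by
    rw [mon_eq_monomial, Finsupp.toMultiset_toFinsupp]
  rw [h1, h2, map_mul, aeval_C, phi_mon, prod_X_pow_univ]
  rw [algebraMap_eq, C_mul_monomial, mul_one]
  rfl

lemma card_toMultiset_eq (α : Ω →₀ ℕ) (hΩ : Ω ⊆ {a | ∑ i, a i = d}) (hd : 1 ≤ d)
    {β : Ω →₀ ℕ} (h : msum (Finsupp.toMultiset α) = msum (Finsupp.toMultiset β)) :
    (Finsupp.toMultiset α).card = (Finsupp.toMultiset β).card := by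
  have h1 := tdeg_msum hΩ (Finsupp.toMultiset α)
  have h2 := tdeg_msum hΩ (Finsupp.toMultiset β)
  rw [h, h2] at h1
  exact (Nat.eq_of_mul_eq_mul_right hd h1).symm

end Algebra

section Main

variable (K : Type*) [Field K]

noncomputable def Jgen (Ω : Set (Fin (n + 1) → ℕ)) : Ideal (MvPolynomial Ω K) :=
  Ideal.span {p : MvPolynomial Ω K | p ∈ toricIdeal K Ω ∧ ∃ m ≤ 3, p.IsHomogeneous m}

lemma mem_toricIdeal (p : MvPolynomial Ω K) :
    p ∈ toricIdeal K Ω ↔ phi K Ω p = 0 := by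
  rw [toricIdeal, RingHom.mem_ker]

lemma mon_isHomogeneous (E : Multiset Ω) : (mon K E).IsHomogeneous E.card := by
  classical
  rw [mon_eq_monomial]
  refine isHomogeneous_monomial _ ?_
  rw [Finsupp.degree, ← Multiset.toFinsupp_sum_eq]
  rfl

variable (hΩ : Ω ⊆ {a | ∑ i, a i = d}) (hd : 1 ≤ d)
variable (H2 : ∀ v : Fin (n + 1) → ℕ, tdeg v = 2 * d → ∃ p q : Ω, v = p.1 + q.1)

lemma step_sub_mem {C C' : Multiset Ω} (h : Step Ω C C') :
    mon K C - mon K C' ∈ Jgen K Ω := by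
  obtain ⟨D, E, E', rfl, rfl, h3, hcard, hmsum⟩ := h
  rw [mon_add, mon_add]
  have heq : mon K E * mon K D - mon K E' * mon K D = (mon K E - mon K E') * mon K D := by
    ring
  rw [heq]
  refine Ideal.mul_mem_right _ _ (Ideal.subset_span ⟨?_, E.card, h3, ?_⟩)
  · rw [mem_toricIdeal, map_sub, phi_mon, phi_mon, hmsum, sub_self]
  · exact (mon_isHomogeneous K E).sub (hcard ▸ mon_isHomogeneous K E')

lemma rel_sub_mem {C C' : Multiset Ω} (h : Rel Ω C C') :
    mon K C - mon K C' ∈ Jgen K Ω := by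
  induction h with
  | refl => rw [sub_self]; exact zero_mem _
  | @tail C' C'' hab hbc ih =>
    have heq : mon K C - mon K C'' =
        (mon K C - mon K C') + (mon K C' - mon K C'') := by ring
    rw [heq]
    exact Ideal.add_mem _ ih (step_sub_mem K hbc)

include hΩ hd H2 in
lemma ker_toJ : ∀ (N : ℕ) (p : MvPolynomial Ω K), p.support.card ≤ N →
    phi K Ω p = 0 → p ∈ Jgen K Ω := by
  classical
  intro N
  induction N with
  | zero =>
    intro p hcard _
    have h0 : p.support = ∅ := Finset.card_eq_zero.mp (Nat.le_zero.mp hcard)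
    have : p = 0 := support_eq_empty.mp h0
    rw [this]
    exact zero_mem _
  | succ N ih =>
    intro p hcard hker
    by_cases hp0 : p = 0
    · rw [hp0]; exact zero_mem _
    obtain ⟨α, hα⟩ := (support_nonempty.mpr hp0)
    have hrep : phi K Ω p = ∑ β ∈ p.support, monomial (expF β) (coeff β p) := by
      conv_lhs => rw [as_sum p]
      rw [map_sum]
      exact Finset.sum_congr rfl fun β _ => phi_monomial K β (coeff β p)
    have hco : (∑ β ∈ p.support, if expF β = expF α then coeff β p else 0) = (0 : K) := by
      have h1 : coeff (expF α) (phi K Ω p) = 0 := by rw [hker]; simp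
      rw [hrep, coeff_sum] at h1
      exact (Finset.sum_congr rfl fun β _ => (coeff_monomial _ _ _).symm).trans h1
    obtain ⟨β, hβmem, hβne, hβeq⟩ : ∃ β ∈ p.support, β ≠ α ∧ expF β = expF α := by
      by_contra hcon
      push_neg at hcon
      have hs : (∑ β ∈ p.support, if expF β = expF α then coeff β p else 0) = coeff α p := by
        rw [Finset.sum_eq_single α]
        · rw [if_pos rfl]
        · intro b hb hbne
          exact if_neg (hcon b hb hbne)
        · intro h
          exact absurd hα h
      rw [hs] at hco
      exact (mem_support_iff.mp hα) hco
    have hmseq : msum (Finsupp.toMultiset β) = msum (Finsupp.toMultiset α) :=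
      Finsupp.equivFunOnFinite.symm.injective hβeq
    have hcards : (Finsupp.toMultiset α).card = (Finsupp.toMultiset β).card :=
      (card_toMultiset_eq β hΩ hd hmseq).symm
    have hrelm : Rel Ω (Finsupp.toMultiset α) (Finsupp.toMultiset β) :=
      conn hΩ H2 hd (Finsupp.toMultiset α).card _ _ rfl hcards.symm hmseq.symm
    have hB : (monomial α 1 - monomial β 1 : MvPolynomial Ω K) ∈ Jgen K Ω := by
      have hmem := rel_sub_mem K hrelm
      rw [mon_eq_monomial, mon_eq_monomial, Finsupp.toMultiset_toFinsupp,
        Finsupp.toMultiset_toFinsupp] at hmem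
      exact hmem
    set q := p - C (coeff α p) * (monomial α 1 - monomial β 1) with hq
    have hqcoeff : ∀ γ, coeff γ q = coeff γ p -
        coeff α p * ((if α = γ then (1 : K) else 0) - if β = γ then (1 : K) else 0) := by
      intro γ
      rw [hq]
      rw [coeff_sub, coeff_C_mul, coeff_sub, coeff_monomial, coeff_monomial]
    have hsup : q.support ⊆ p.support.erase α := by
      intro γ hγ
      have hγ0 : coeff γ q ≠ 0 := mem_support_iff.mp hγ
      have hγα : γ ≠ α := by
        rintro rfl
        apply hγ0
        rw [hqcoeff γ, if_pos rfl, if_neg hβne]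
        ring
      have hγp : γ ∈ p.support := by
        by_cases hγβ : γ = β
        · exact hγβ ▸ hβmem
        · refine mem_support_iff.mpr fun h0 => hγ0 ?_
          rw [hqcoeff γ, if_neg (fun h => hγα h.symm), if_neg (fun h => hγβ h.symm), h0]
          ring
      exact Finset.mem_erase.mpr ⟨hγα, hγp⟩
    have hq0 : phi K Ω q = 0 := by
      rw [hq, map_sub, map_mul, aeval_C, map_sub, phi_monomial, phi_monomial, hβeq,
        sub_self, mul_zero, sub_zero, hker]
    have hqcard : q.support.card ≤ N := by
      have h1 := Finset.card_le_card hsup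
      have h2 := Finset.card_erase_of_mem hα
      omega
    have hqJ := ih q hqcard hq0
    have hpq : p = q + C (coeff α p) * (monomial α 1 - monomial β 1) := by
      rw [hq]; ring
    rw [hpq]
    exact Ideal.add_mem _ hqJ (Ideal.mul_mem_left _ _ hB)

end Main

end Stmt5Aux

/-- if `Ω ⊆ M_{n,d}` spans a 2-normal space, then the toric ideal `I(Ω)` is
generated in degrees at most 3. -/
theorem stmt5 (K : Type*) [Field K] (n d : ℕ) (hn : 1 ≤ n) (hd : 1 ≤ d)
    (Ω : Set (Fin (n + 1) → ℕ)) (hΩsub : Ω ⊆ {a | ∑ i, a i = d})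
    (h2 : ∀ a : Fin (n + 1) → ℕ, ∑ i, a i = 2 * d → ∃ b ∈ Ω, ∃ c ∈ Ω, a = b + c) :
    genInDegLE K Ω 3 := by
  classical
  have H2 : ∀ v : Fin (n + 1) → ℕ, Stmt5Aux.tdeg v = 2 * d → ∃ p q : Ω, v = p.1 + q.1 := by
    intro v hv
    obtain ⟨b, hb, c, hc, h⟩ := h2 v hv
    exact ⟨⟨b, hb⟩, ⟨c, hc⟩, h⟩
  unfold genInDegLE
  apply le_antisymm
  · intro p hp
    have hker : Stmt5Aux.phi K Ω p = 0 := (Stmt5Aux.mem_toricIdeal K p).mp hp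
    exact Stmt5Aux.ker_toJ K hΩsub hd H2 p.support.card p le_rfl hker
  · rw [Ideal.span_le]
    rintro p ⟨h1, -⟩
    exact h1
end

section
/- Let G be a finite subgroup of (Fin 3 → ℂˣ) of cardinality d which is NOT cyclic. Then the toric ideal I(B₁) of the set B₁ of G-invariant exponent vectors of degree d is generated by quadrics. (The paper states this as Koszulness of the coordinate ring, which it proves equivalent to being quadratic.) -/
open MvPolynomial

namespace Stmt10Aux

/-- Bundled hypotheses about the invariance predicate. -/
structure Setup (e k : ℕ) (Ω : Set (Fin 3 → ℕ)) (InvP : (Fin 3 → ℕ) → Prop) : Prop where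
  he : 0 < e
  hk : 2 ≤ k
  mem : ∀ a, a ∈ Ω ↔ InvP a ∧ ∑ i, a i = e * k
  add : ∀ a b, InvP a → InvP b → InvP (fun i => a i + b i)
  mod : ∀ a b, (∀ i, a i % e = b i % e) → InvP a → InvP b
  zero : InvP (fun _ => 0)

variable {e k : ℕ} {Ω : Set (Fin 3 → ℕ)} {InvP : (Fin 3 → ℕ) → Prop}

/-- coordinatewise sum of a multiset of points of `Ω`. -/
def msum (M : Multiset Ω) (i : Fin 3) : ℕ := (M.map fun a => a.1 i).sum

@[simp] lemma msum_zero (i : Fin 3) : msum (0 : Multiset Ω) i = 0 := rfl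

@[simp] lemma msum_cons (x : Ω) (M : Multiset Ω) (i : Fin 3) :
    msum (x ::ₘ M) i = x.1 i + msum M i := by
  simp [msum]

/-- A quadratic swap between multisets of points. -/
def Step (M N : Multiset Ω) : Prop :=
  ∃ (C : Multiset Ω) (x y z w : Ω), M = x ::ₘ y ::ₘ C ∧ N = z ::ₘ w ::ₘ C ∧
    (∀ i, x.1 i + y.1 i = z.1 i + w.1 i)

/-- Connectedness by quadratic swaps. -/
def Rel : Multiset Ω → Multiset Ω → Prop := Relation.ReflTransGen Step

lemma Step.symm {M N : Multiset Ω} (h : Step M N) : Step N M := by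
  obtain ⟨C, x, y, z, w, h1, h2, h3⟩ := h
  exact ⟨C, z, w, x, y, h2, h1, fun i => (h3 i).symm⟩

lemma Rel.refl (M : Multiset Ω) : Rel M M := Relation.ReflTransGen.refl

lemma Rel.trans {M N K : Multiset Ω} (h1 : Rel M N) (h2 : Rel N K) : Rel M K :=
  Relation.ReflTransGen.trans h1 h2

lemma Rel.single {M N : Multiset Ω} (h : Step M N) : Rel M N :=
  Relation.ReflTransGen.single h

lemma Rel.symm {M N : Multiset Ω} (h : Rel M N) : Rel N M := by
  induction h with
  | refl => exact Rel.refl _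
  | tail _ hstep ih => exact Rel.trans (Rel.single hstep.symm) ih

lemma Step.cons (a : Ω) {M N : Multiset Ω} (h : Step M N) : Step (a ::ₘ M) (a ::ₘ N) := by
  obtain ⟨C, x, y, z, w, h1, h2, h3⟩ := h
  refine ⟨a ::ₘ C, x, y, z, w, ?_, ?_, h3⟩
  · rw [h1]
    exact (Multiset.cons_swap a x _).trans (congrArg _ (Multiset.cons_swap a y C))
  · rw [h2]
    exact (Multiset.cons_swap a z _).trans (congrArg _ (Multiset.cons_swap a w C))

lemma Rel.cons (a : Ω) {M N : Multiset Ω} (h : Rel M N) : Rel (a ::ₘ M) (a ::ₘ N) := by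
  induction h with
  | refl => exact Rel.refl _
  | tail _ hstep ih => exact Rel.trans ih (Rel.single (hstep.cons a))

lemma Step.msum_eq {M N : Multiset Ω} (h : Step M N) (i : Fin 3) : msum M i = msum N i := by
  obtain ⟨C, x, y, z, w, h1, h2, h3⟩ := h
  subst h1; subst h2
  simp only [msum_cons]
  have := h3 i
  omega

lemma Rel.msum_eq {M N : Multiset Ω} (h : Rel M N) (i : Fin 3) : msum M i = msum N i := by
  induction h with
  | refl => rfl
  | tail _ hstep ih => exact ih.trans (hstep.msum_eq i)

lemma Step.card_eq {M N : Multiset Ω} (h : Step M N) : Multiset.card M = Multiset.card N := by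
  obtain ⟨C, x, y, z, w, h1, h2, _⟩ := h
  subst h1; subst h2; simp

lemma Rel.card_eq {M N : Multiset Ω} (h : Rel M N) : Multiset.card M = Multiset.card N := by
  induction h with
  | refl => rfl
  | tail _ hstep ih => exact ih.trans hstep.card_eq

/-- If `a < b` and they agree mod `e`, then `a + e ≤ b`. -/
lemma mod_gap {a b : ℕ} (he : 0 < e) (h : a % e = b % e) (hab : a < b) : a + e ≤ b := by
  have h1 := Nat.div_add_mod a e
  have h2 := Nat.div_add_mod b e
  have hq : a / e < b / e := by
    by_contra hc
    push_neg at hc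
    have := Nat.mul_le_mul_left e hc
    omega
  have : e * (a / e + 1) ≤ e * (b / e) := Nat.mul_le_mul_left e hq
  have he2 : e * (a / e + 1) = e * (a / e) + e := by ring
  omega

lemma sub_mod_self {a : ℕ} (h : e ≤ a) : (a - e) % e = a % e := by
  conv_rhs => rw [← Nat.sub_add_cancel h]
  rw [Nat.add_mod_right]

lemma mem_sum (S : Setup e k Ω InvP) (a : Ω) : ∑ i, a.1 i = e * k := ((S.mem a.1).mp a.2).2

lemma mem_inv (S : Setup e k Ω InvP) (a : Ω) : InvP a.1 := ((S.mem a.1).mp a.2).1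

/-- For any pair in `Ω`, we may re-split the sum as `z + w` where `w ≡ 0 (mod e)`
and `z ≡ x + y (mod e)`. Needs `k ≥ 2`. -/
lemma pair_normalize (S : Setup e k Ω InvP) (x y : Ω) :
    ∃ z w : Ω, (∀ i, x.1 i + y.1 i = z.1 i + w.1 i) ∧ (∀ i, w.1 i % e = 0) := by
  classical
  set u : Fin 3 → ℕ := fun i => x.1 i + y.1 i with hu
  have hsu : ∑ i, u i = 2 * (e * k) := by
    have hx := mem_sum S x
    have hy := mem_sum S y
    simp only [hu]
    rw [Finset.sum_add_distrib, hx, hy]; ring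
  set c : Fin 3 → ℕ := fun i => u i / e with hc
  set t : Fin 3 → ℕ := fun i => u i % e with ht
  have hect : ∀ i, e * c i + t i = u i := fun i => Nat.div_add_mod (u i) e
  have htlt : ∀ i, t i < e := fun i => Nat.mod_lt _ S.he
  have he' : 0 < e := S.he
  have hk' : 2 ≤ k := S.hk
  have hsum_ect : e * (∑ i, c i) + ∑ i, t i = e * (2 * k) := by
    rw [Finset.mul_sum, ← Finset.sum_add_distrib]
    rw [Finset.sum_congr rfl (fun i _ => hect i), hsu]; ring
  have hcle : ∑ i, c i ≤ 2 * k := by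
    by_contra hcon
    push_neg at hcon
    have h2 : e * (2 * k + 1) ≤ e * (∑ i, c i) := Nat.mul_le_mul_left e hcon
    have h3 : e * (2 * k + 1) = e * (2 * k) + e := by ring
    omega
  obtain ⟨ρ, hρ⟩ : ∃ ρ, ρ = 2 * k - ∑ i, c i := ⟨_, rfl⟩
  have hρ' : ∑ i, c i + ρ = 2 * k := by omega
  have hsumt : ∑ i, t i = e * ρ := by
    have h1 : e * (∑ i, c i) + e * ρ = e * (2 * k) := by
      rw [← Nat.mul_add, hρ']
    omega
  have hρ2 : ρ ≤ 2 := by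
    have h5 : ∑ i, t i ≤ 3 * e - 3 := by
      have := htlt 0; have := htlt 1; have := htlt 2
      rw [Fin.sum_univ_three]
      omega
    by_contra hcon
    push_neg at hcon
    have h6 : e * 3 ≤ e * ρ := Nat.mul_le_mul_left e hcon
    have h7 : e * 3 = 3 * e := by ring
    omega
  have hρk : ρ ≤ k := le_trans hρ2 S.hk
  obtain ⟨κ, hκ⟩ : ∃ κ, κ = k - ρ := ⟨_, rfl⟩
  have hκρ : ρ + κ = k := by omega
  have hκc : κ ≤ ∑ i, c i := by omega
  -- greedy choice of q
  obtain ⟨q, hqc, hqsum⟩ : ∃ q : Fin 3 → ℕ, (∀ i, q i ≤ c i) ∧ ∑ i, q i = κ := by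
    rw [Fin.sum_univ_three] at hκc
    refine ⟨![min (c 0) κ, min (c 1) (κ - min (c 0) κ),
      κ - min (c 0) κ - min (c 1) (κ - min (c 0) κ)], ?_, ?_⟩
    · intro i; fin_cases i <;> simp <;> omega
    · rw [Fin.sum_univ_three]; simp
  have hzu : ∀ i, t i + e * q i ≤ u i := by
    intro i
    have h6 : e * q i ≤ e * c i := Nat.mul_le_mul_left e (hqc i)
    have := hect i
    omega
  set zv : Fin 3 → ℕ := fun i => t i + e * q i with hzv
  set wv : Fin 3 → ℕ := fun i => u i - zv i with hwv
  have hzw : ∀ i, u i = zv i + wv i := by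
    intro i
    have := hzu i
    simp only [hwv, hzv]
    omega
  have hzsum : ∑ i, zv i = e * k := by
    simp only [hzv]
    rw [Finset.sum_add_distrib, ← Finset.mul_sum, hqsum, hsumt]
    rw [← Nat.mul_add, hκρ]
  have hwsum : ∑ i, wv i = e * k := by
    have h7 : ∑ i, zv i + ∑ i, wv i = 2 * (e * k) := by
      rw [← Finset.sum_add_distrib, ← hsu]
      exact Finset.sum_congr rfl (fun i _ => (hzw i).symm)
    omega
  have hzmod : ∀ i, zv i % e = u i % e := by
    intro i
    simp only [hzv, ht]
    rw [Nat.add_mul_mod_self_left, Nat.mod_mod_of_dvd _ dvd_rfl]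
  have hwmod : ∀ i, wv i % e = 0 := by
    intro i
    have h8 : wv i = e * (c i - q i) := by
      have h9 : e * (c i - q i) = e * c i - e * q i := Nat.mul_sub e _ _
      have h10 := hect i
      have h11 : e * q i ≤ e * c i := Nat.mul_le_mul_left e (hqc i)
      simp only [hwv, hzv]
      omega
    rw [h8]
    exact Nat.mul_mod_right e _
  have hinvu : InvP u := S.add x.1 y.1 (mem_inv S x) (mem_inv S y)
  have hinvz : InvP zv := S.mod u zv (fun i => (hzmod i).symm) hinvu
  have hinvw : InvP wv := S.mod (fun _ => 0) wv (fun i => by simp [hwmod i]) S.zero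
  exact ⟨⟨zv, (S.mem zv).mpr ⟨hinvz, hzsum⟩⟩, ⟨wv, (S.mem wv).mpr ⟨hinvw, hwsum⟩⟩,
    fun i => hzw i, hwmod⟩


/-- Modify a vector by adding `e` at coordinate `i` and subtracting `e` at `j`. -/
def swapv (e : ℕ) (v : Fin 3 → ℕ) (i j : Fin 3) : Fin 3 → ℕ :=
  fun l => if l = i then v l + e else if l = j then v l - e else v l

variable {i j : Fin 3} {v : Fin 3 → ℕ}

lemma swapv_i (hij : i ≠ j) (v : Fin 3 → ℕ) : swapv e v i j i = v i + e := by
  simp [swapv]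

lemma swapv_j (hij : i ≠ j) (v : Fin 3 → ℕ) : swapv e v i j j = v j - e := by
  simp [swapv, hij.symm]

lemma swapv_other (v : Fin 3 → ℕ) {l : Fin 3} (hl1 : l ≠ i) (hl2 : l ≠ j) :
    swapv e v i j l = v l := by
  simp [swapv, hl1, hl2]

lemma swapv_mod (hij : i ≠ j) (hj : e ≤ v j) (l : Fin 3) :
    swapv e v i j l % e = v l % e := by
  by_cases hl1 : l = i
  · subst hl1; rw [swapv_i hij]; exact Nat.add_mod_right _ _
  · by_cases hl2 : l = j
    · subst hl2; rw [swapv_j hij]; exact sub_mod_self hj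
    · rw [swapv_other v hl1 hl2]

lemma swapv_sum (hij : i ≠ j) (hj : e ≤ v j) :
    ∑ l, swapv e v i j l = ∑ l, v l := by
  rw [Fin.sum_univ_three, Fin.sum_univ_three]
  fin_cases i <;> fin_cases j <;>
    simp_all [swapv] <;> omega

/-- Fold a multiset: everything except one element can be made `≡ 0 (mod e)`. -/
lemma fold (S : Setup e k Ω InvP) :
    ∀ (M : Multiset Ω) (x : Ω), ∃ (z : Ω) (F : Multiset Ω),
      Rel (x ::ₘ M) (z ::ₘ F) ∧ (∀ w ∈ F, ∀ l, w.1 l % e = 0) := by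
  intro M
  induction M using Multiset.induction_on with
  | empty => exact fun x => ⟨x, 0, Rel.refl _, by simp⟩
  | cons a M' ih =>
    intro x
    obtain ⟨z₁, w₁, hsum, hw₁⟩ := pair_normalize S x a
    obtain ⟨z, F', hrel, hF'⟩ := ih z₁
    refine ⟨z, w₁ ::ₘ F', ?_, ?_⟩
    · have h1 : Step (x ::ₘ a ::ₘ M') (z₁ ::ₘ w₁ ::ₘ M') :=
        ⟨M', x, a, z₁, w₁, rfl, rfl, hsum⟩
      have h2 : Rel (w₁ ::ₘ z₁ ::ₘ M') (w₁ ::ₘ z ::ₘ F') := Rel.cons w₁ hrel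
      rw [Multiset.cons_swap] at h2
      have h3 : (w₁ ::ₘ z ::ₘ F') = (z ::ₘ w₁ ::ₘ F') := Multiset.cons_swap _ _ _
      rw [h3] at h2
      exact Rel.trans (Rel.single h1) h2
    · intro w hw l
      rcases Multiset.mem_cons.mp hw with h | h
      · subst h; exact hw₁ l
      · exact hF' w h l

lemma sum3_swap {e : ℕ} (f g : Fin 3 → ℕ) (i j : Fin 3) (hij : i ≠ j)
    (h_i : g i + e = f i) (h_j : g j + e = f j)
    (h_o : ∀ l, l ≠ i → l ≠ j → g l = f l) :
    (∑ l, g l) + 2 * e = ∑ l, f l := by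
  rw [Fin.sum_univ_three, Fin.sum_univ_three]
  fin_cases i <;> fin_cases j
  · exact absurd rfl hij
  · have a1 : g 0 + e = f 0 := h_i
    have a2 : g 1 + e = f 1 := h_j
    have a3 : g 2 = f 2 := h_o 2 (by decide) (by decide)
    omega
  · have a1 : g 0 + e = f 0 := h_i
    have a2 : g 2 + e = f 2 := h_j
    have a3 : g 1 = f 1 := h_o 1 (by decide) (by decide)
    omega
  · have a1 : g 1 + e = f 1 := h_i
    have a2 : g 0 + e = f 0 := h_j
    have a3 : g 2 = f 2 := h_o 2 (by decide) (by decide)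
    omega
  · exact absurd rfl hij
  · have a1 : g 1 + e = f 1 := h_i
    have a2 : g 2 + e = f 2 := h_j
    have a3 : g 0 = f 0 := h_o 0 (by decide) (by decide)
    omega
  · have a1 : g 2 + e = f 2 := h_i
    have a2 : g 0 + e = f 0 := h_j
    have a3 : g 1 = f 1 := h_o 1 (by decide) (by decide)
    omega
  · have a1 : g 2 + e = f 2 := h_i
    have a2 : g 1 + e = f 1 := h_j
    have a3 : g 0 = f 0 := h_o 0 (by decide) (by decide)
    omega
  · exact absurd rfl hij

/-- Walk the distinguished element toward the target `x` using `±e` transfers with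
elements that are `≡ 0 (mod e)`. -/
lemma approach (S : Setup e k Ω InvP) :
    ∀ (n : ℕ) (y₀ : Ω) (F : Multiset Ω) (x : Ω),
      (∀ w ∈ F, ∀ l, w.1 l % e = 0) →
      (∀ l, y₀.1 l % e = x.1 l % e) →
      (∀ l, x.1 l ≤ y₀.1 l + msum F l) →
      (∑ l, ((y₀.1 l - x.1 l) + (x.1 l - y₀.1 l))) ≤ n →
      ∃ F', Rel (y₀ ::ₘ F) (x ::ₘ F') ∧ (∀ w ∈ F', ∀ l, w.1 l % e = 0) := by
  intro n
  induction n with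
  | zero =>
    intro y₀ F x hF hmod hdom hdist
    have hyx : y₀ = x := by
      have h1 : ∑ l, ((y₀.1 l - x.1 l) + (x.1 l - y₀.1 l)) = 0 := Nat.le_zero.mp hdist
      rw [Fin.sum_univ_three] at h1
      have e0 : y₀.1 0 = x.1 0 := by omega
      have e1 : y₀.1 1 = x.1 1 := by omega
      have e2 : y₀.1 2 = x.1 2 := by omega
      apply Subtype.ext
      funext l
      fin_cases l
      · exact e0
      · exact e1
      · exact e2
    exact ⟨F, hyx ▸ Rel.refl _, hF⟩
  | succ n ih =>
    intro y₀ F x hF hmod hdom hdist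
    have he' : 0 < e := S.he
    by_cases hyx : y₀.1 = x.1
    · exact ⟨F, (Subtype.ext hyx) ▸ Rel.refl _, hF⟩
    have hsy : ∑ l, y₀.1 l = ∑ l, x.1 l := (mem_sum S y₀).trans (mem_sum S x).symm
    -- find a coordinate where y₀ is short
    have hex_i : ∃ l, y₀.1 l < x.1 l := by
      by_contra hcon
      push_neg at hcon
      apply hyx
      funext l
      exact ((Finset.sum_eq_sum_iff_of_le
        (fun l _ => hcon l)).mp hsy.symm l (Finset.mem_univ l)).symm
    obtain ⟨i, hi⟩ := hex_i
    have hex_j : ∃ l, x.1 l < y₀.1 l := by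
      by_contra hcon
      push_neg at hcon
      have hlt : ∑ l, y₀.1 l < ∑ l, x.1 l :=
        Finset.sum_lt_sum (fun l _ => hcon l) ⟨i, Finset.mem_univ i, hi⟩
      exact absurd hlt (not_lt.mpr hsy.ge)
    obtain ⟨j, hj⟩ := hex_j
    have hij : i ≠ j := by
      intro h; subst h; omega
    have hgap_i : y₀.1 i + e ≤ x.1 i := mod_gap S.he (hmod i) hi
    have hgap_j : x.1 j + e ≤ y₀.1 j := mod_gap S.he (hmod j).symm hj
    have hej : e ≤ y₀.1 j := by omega
    -- find a partner in F with at least e at coordinate i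
    have hmsF : e ≤ msum F i := by
      have := hdom i
      omega
    have hex_y1 : ∃ w ∈ F, e ≤ w.1 i := by
      by_contra hcon
      push_neg at hcon
      have hzero : msum F i = 0 := by
        apply Multiset.sum_eq_zero
        intro b hb
        obtain ⟨w, hw, rfl⟩ := Multiset.mem_map.mp hb
        have h1 := hcon w hw
        have h2 := hF w hw i
        have h3 : w.1 i % e = w.1 i := Nat.mod_eq_of_lt h1
        omega
      omega
    obtain ⟨y₁, hy₁F, hy₁i⟩ := hex_y1
    obtain ⟨F₂, rfl⟩ := Multiset.exists_cons_of_mem hy₁F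
    -- the swapped elements
    have hy₀mem : swapv e y₀.1 i j ∈ Ω := by
      rw [S.mem]
      constructor
      · exact S.mod y₀.1 _ (fun l => (swapv_mod hij hej l).symm) (mem_inv S y₀)
      · rw [swapv_sum hij hej]; exact mem_sum S y₀
    have hy₁mem : swapv e y₁.1 j i ∈ Ω := by
      rw [S.mem]
      constructor
      · exact S.mod y₁.1 _ (fun l => (swapv_mod hij.symm hy₁i l).symm) (mem_inv S y₁)
      · rw [swapv_sum hij.symm hy₁i]; exact mem_sum S y₁
    set y₀' : Ω := ⟨swapv e y₀.1 i j, hy₀mem⟩ with hy₀'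
    set y₁' : Ω := ⟨swapv e y₁.1 j i, hy₁mem⟩ with hy₁'
    -- pointwise facts
    have hpt : ∀ l, y₀.1 l + y₁.1 l = y₀'.1 l + y₁'.1 l := by
      intro l
      by_cases hl1 : l = i
      · subst hl1
        rw [hy₀', hy₁']
        simp only
        rw [swapv_i hij, swapv_j hij.symm]
        omega
      · by_cases hl2 : l = j
        · subst hl2
          rw [hy₀', hy₁']
          simp only
          rw [swapv_j hij, swapv_i hij.symm]
          omega
        · rw [hy₀', hy₁']
          simp only
          rw [swapv_other _ hl1 hl2, swapv_other _ hl2 hl1]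
    have hstep : Step (y₀ ::ₘ y₁ ::ₘ F₂) (y₀' ::ₘ y₁' ::ₘ F₂) :=
      ⟨F₂, y₀, y₁, y₀', y₁', rfl, rfl, hpt⟩
    -- recursive call
    have hF₂' : ∀ w ∈ y₁' ::ₘ F₂, ∀ l, w.1 l % e = 0 := by
      intro w hw l
      rcases Multiset.mem_cons.mp hw with h | h
      · subst h
        rw [hy₁']
        simp only
        rw [swapv_mod hij.symm hy₁i l]
        exact hF y₁ hy₁F l
      · exact hF w (Multiset.mem_cons_of_mem h) l
    have hmod' : ∀ l, y₀'.1 l % e = x.1 l % e := by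
      intro l
      rw [hy₀']
      simp only
      rw [swapv_mod hij hej l]
      exact hmod l
    have hdom' : ∀ l, x.1 l ≤ y₀'.1 l + msum (y₁' ::ₘ F₂) l := by
      intro l
      have h1 := hdom l
      rw [msum_cons] at h1 ⊢
      have h2 := hpt l
      omega
    have hi' : y₀'.1 i = y₀.1 i + e := by rw [hy₀']; exact swapv_i hij _
    have hj' : y₀'.1 j = y₀.1 j - e := by rw [hy₀']; exact swapv_j hij _
    have hoth : ∀ l, l ≠ i → l ≠ j → y₀'.1 l = y₀.1 l := by
      intro l h1 h2; rw [hy₀']; exact swapv_other _ h1 h2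
    have hsum3 : (∑ l, ((y₀'.1 l - x.1 l) + (x.1 l - y₀'.1 l))) + 2 * e
        = ∑ l, ((y₀.1 l - x.1 l) + (x.1 l - y₀.1 l)) := sum3_swap
      (fun l => (y₀.1 l - x.1 l) + (x.1 l - y₀.1 l))
      (fun l => (y₀'.1 l - x.1 l) + (x.1 l - y₀'.1 l)) i j hij
      (by show (y₀'.1 i - x.1 i) + (x.1 i - y₀'.1 i) + e
            = (y₀.1 i - x.1 i) + (x.1 i - y₀.1 i)
          rw [hi']; omega)
      (by show (y₀'.1 j - x.1 j) + (x.1 j - y₀'.1 j) + e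
            = (y₀.1 j - x.1 j) + (x.1 j - y₀.1 j)
          rw [hj']; omega)
      (fun l hl1 hl2 => by
          show (y₀'.1 l - x.1 l) + (x.1 l - y₀'.1 l)
            = (y₀.1 l - x.1 l) + (x.1 l - y₀.1 l)
          rw [hoth l hl1 hl2])
    have hdist' : (∑ l, ((y₀'.1 l - x.1 l) + (x.1 l - y₀'.1 l))) ≤ n := by
      omega
    obtain ⟨F', hrel', hF''⟩ := ih y₀' (y₁' ::ₘ F₂) x hF₂' hmod' hdom' hdist'
    exact ⟨F', Rel.trans (Rel.single hstep) hrel', hF''⟩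

/-- Connectivity for multisets all of whose elements are `≡ 0 (mod e)`. -/
lemma conn0 (S : Setup e k Ω InvP) :
    ∀ (M N : Multiset Ω),
      (∀ w ∈ M, ∀ l, w.1 l % e = 0) → (∀ w ∈ N, ∀ l, w.1 l % e = 0) →
      Multiset.card M = Multiset.card N → (∀ l, msum M l = msum N l) →
      Rel M N := by
  intro M
  induction M using Multiset.induction_on with
  | empty =>
    intro N _ _ hcard _
    have hN0 : N = 0 := Multiset.card_eq_zero.mp (by simpa using hcard.symm)
    rw [hN0]
    exact Rel.refl _
  | cons x M₂ ih =>
    intro N hM hN hcard hmsum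
    have hNne : N ≠ 0 := by
      intro h; subst h; simp at hcard
    obtain ⟨y₀, hy₀⟩ := Multiset.exists_mem_of_ne_zero hNne
    obtain ⟨N₂, rfl⟩ := Multiset.exists_cons_of_mem hy₀
    have hxM : x ∈ x ::ₘ M₂ := Multiset.mem_cons_self x M₂
    obtain ⟨F', hrel, hF'⟩ := approach S
      (∑ l, ((y₀.1 l - x.1 l) + (x.1 l - y₀.1 l))) y₀ N₂ x
      (fun w hw l => hN w (Multiset.mem_cons_of_mem hw) l)
      (fun l => by rw [hN y₀ (Multiset.mem_cons_self _ _) l, hM x hxM l])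
      (fun l => by
        have h1 := hmsum l
        rw [msum_cons, msum_cons] at h1
        omega)
      le_rfl
    -- now peel x
    have hcard2 : Multiset.card M₂ = Multiset.card F' := by
      have h1 := hrel.card_eq
      simp at h1 hcard
      omega
    have hmsum2 : ∀ l, msum M₂ l = msum F' l := by
      intro l
      have h1 := hrel.msum_eq l
      have h2 := hmsum l
      simp only [msum_cons] at h1 h2
      omega
    have hrel2 : Rel M₂ F' := ih F' (fun w hw l => hM w (Multiset.mem_cons_of_mem hw) l)
      hF' hcard2 hmsum2
    exact Rel.trans (Rel.cons x hrel2) hrel.symm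

lemma msum_mod_zero {F : Multiset Ω} (hF : ∀ w ∈ F, ∀ l, w.1 l % e = 0) (l : Fin 3) :
    msum F l % e = 0 := by
  induction F using Multiset.induction_on with
  | empty => simp
  | cons a F₂ ih =>
    rw [msum_cons, Nat.add_mod, hF a (Multiset.mem_cons_self _ _) l,
      ih (fun w hw => hF w (Multiset.mem_cons_of_mem hw))]
    simp

/-- Main connectivity theorem. -/
theorem conn (S : Setup e k Ω InvP) (M N : Multiset Ω)
    (hcard : Multiset.card M = Multiset.card N) (hmsum : ∀ l, msum M l = msum N l) :
    Rel M N := by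
  classical
  rcases Multiset.empty_or_exists_mem M with rfl | ⟨x, hx⟩
  · have hN0 : N = 0 := Multiset.card_eq_zero.mp (by simpa using hcard.symm)
    rw [hN0]
    exact Rel.refl _
  obtain ⟨M', rfl⟩ := Multiset.exists_cons_of_mem hx
  have hNne : N ≠ 0 := by
    intro h; subst h; simp at hcard
  obtain ⟨y, hy⟩ := Multiset.exists_mem_of_ne_zero hNne
  obtain ⟨N', rfl⟩ := Multiset.exists_cons_of_mem hy
  obtain ⟨zM, FM, hrelM, hFM⟩ := fold S M' x
  obtain ⟨zN, FN, hrelN, hFN⟩ := fold S N' y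
  -- residues of zM and zN agree
  have hress : ∀ l, zM.1 l % e = zN.1 l % e := by
    intro l
    have h1 : msum (x ::ₘ M') l = msum (zM ::ₘ FM) l := hrelM.msum_eq l
    have h2 : msum (y ::ₘ N') l = msum (zN ::ₘ FN) l := hrelN.msum_eq l
    have h3 := hmsum l
    rw [msum_cons, msum_cons] at h1 h2
    rw [msum_cons, msum_cons] at h3
    have h4 : (zM.1 l + msum FM l) % e = zM.1 l % e := by
      rw [Nat.add_mod, msum_mod_zero hFM l, Nat.add_zero, Nat.mod_mod_of_dvd _ dvd_rfl]
    have h5 : (zN.1 l + msum FN l) % e = zN.1 l % e := by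
      rw [Nat.add_mod, msum_mod_zero hFN l, Nat.add_zero, Nat.mod_mod_of_dvd _ dvd_rfl]
    have h6 : zM.1 l + msum FM l = zN.1 l + msum FN l := by omega
    rw [← h4, ← h5, h6]
  -- bring zM into the N side
  obtain ⟨FN', hrelN2, hFN'⟩ := approach S
    (∑ l, ((zN.1 l - zM.1 l) + (zM.1 l - zN.1 l))) zN FN zM
    hFN (fun l => (hress l).symm)
    (fun l => by
      have h1 : msum (zN ::ₘ FN) l = msum (zM ::ₘ FM) l := by
        rw [← hrelN.msum_eq l, ← hrelM.msum_eq l]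
        exact (hmsum l).symm
      rw [msum_cons, msum_cons] at h1
      omega)
    le_rfl
  -- connect the two type-0 parts
  have hcard2 : Multiset.card FM = Multiset.card FN' := by
    have h1 := hrelM.card_eq
    have h2 := hrelN.card_eq
    have h3 := hrelN2.card_eq
    simp at h1 h2 h3 hcard
    omega
  have hmsum2 : ∀ l, msum FM l = msum FN' l := by
    intro l
    have h1 := hrelM.msum_eq l
    have h2 := (hrelN.trans hrelN2).msum_eq l
    have h3 := hmsum l
    simp only [msum_cons] at h1 h2 h3
    omega
  have hrel0 : Rel FM FN' := conn0 S FM FN' hFM hFN' hcard2 hmsum2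
  exact hrelM.trans ((Rel.cons zM hrel0).trans (hrelN2.symm.trans hrelN.symm))





noncomputable def toF (a : Fin 3 → ℕ) : Fin 3 →₀ ℕ := Finsupp.equivFunOnFinite.symm a

@[simp] lemma toF_apply (a : Fin 3 → ℕ) (i : Fin 3) : toF a i = a i := rfl

lemma multiset_prod_monomial {σ α : Type*} (g : α → (σ →₀ ℕ)) (M : Multiset α) :
    (M.map fun a => (monomial (g a) (1 : ℂ) : MvPolynomial σ ℂ)).prod
      = monomial (M.map g).sum 1 := by
  induction M using Multiset.induction_on with
  | empty => simp
  | cons a M ih => simp [ih, monomial_mul]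

lemma finset_prod_monomial {σ ι : Type*} (g : ι → (σ →₀ ℕ)) (s : Finset ι) :
    ∏ i ∈ s, (monomial (g i) (1 : ℂ) : MvPolynomial σ ℂ) = monomial (∑ i ∈ s, g i) 1 := by
  classical
  induction s using Finset.induction_on with
  | empty => simp
  | insert _ _ h ih => rw [Finset.prod_insert h, Finset.sum_insert h, ih, monomial_mul, one_mul]

lemma f_eq (a : Ω) : (∏ i, (X i : MvPolynomial (Fin 3) ℂ) ^ (a.1 i)) = monomial (toF a.1) 1 := by
  have h1 : ∀ i : Fin 3, (X i : MvPolynomial (Fin 3) ℂ) ^ (a.1 i)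
      = monomial (Finsupp.single i (a.1 i)) 1 := fun i => X_pow_eq_monomial
  rw [Finset.prod_congr rfl (fun i _ => h1 i), finset_prod_monomial]
  have h2 : (∑ i, Finsupp.single i (a.1 i)) = toF a.1 := by
    ext j
    simp [Finsupp.finset_sum_apply, Finsupp.single_apply]
  rw [h2]

/-- The algebra map. -/
noncomputable def phi : MvPolynomial Ω ℂ →ₐ[ℂ] MvPolynomial (Fin 3) ℂ :=
  aeval fun a : Ω => ∏ i, (X i : MvPolynomial (Fin 3) ℂ) ^ (a.1 i)

lemma aeval_monoM (M : Multiset Ω) :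
    phi ((M.map X).prod) = monomial ((M.map fun a => toF a.1).sum) 1 := by
  rw [map_multiset_prod, Multiset.map_map]
  have h : (M.map fun a => phi (X a)) = M.map fun a => monomial (toF a.1) 1 :=
    Multiset.map_congr rfl (fun a _ => by rw [phi, aeval_X, f_eq])
  rw [Function.comp_def, h, multiset_prod_monomial (fun a : Ω => toF a.1) M]

lemma monomial_eq_monoM (ν : Ω →₀ ℕ) :
    (monomial ν (1 : ℂ) : MvPolynomial Ω ℂ) = ((ν.toMultiset).map X).prod := by
  induction ν using Finsupp.induction with
  | zero => simp
  | single_add a n ν hna hn ih =>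
    have h3 : (Multiset.map X (Finsupp.toMultiset (Finsupp.single a n))).prod
        = (monomial (Finsupp.single a n) (1 : ℂ) : MvPolynomial Ω ℂ) := by
      rw [Finsupp.toMultiset_single, ← X_pow_eq_monomial]
      rw [Multiset.map_nsmul, Multiset.map_singleton, Multiset.prod_nsmul,
        Multiset.prod_singleton]
    rw [Finsupp.toMultiset_add, Multiset.map_add, Multiset.prod_add, ← ih, h3,
      monomial_mul, one_mul]

/-- image exponent of a monomial -/
noncomputable def SF (ν : Ω →₀ ℕ) : Fin 3 →₀ ℕ := ((ν.toMultiset).map fun a => toF a.1).sum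

lemma phi_monomial (ν : Ω →₀ ℕ) (c : ℂ) :
    phi (monomial ν c) = monomial (SF ν) c := by
  have h1 : (monomial ν c : MvPolynomial Ω ℂ) = C c * monomial ν 1 := by
    rw [C_mul_monomial, mul_one]
  rw [h1, map_mul, monomial_eq_monoM, aeval_monoM]
  have h2 : phi (C c : MvPolynomial Ω ℂ) = C c := by
    simp [phi]
  rw [h2, C_mul_monomial, mul_one, SF]


lemma SF_apply_msum (M : Multiset Ω) (i : Fin 3) :
    ((M.map fun a => toF a.1).sum) i = msum M i := by
  induction M using Multiset.induction_on with
  | empty => simp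
  | cons a M ih => simp [ih, Finsupp.add_apply]

lemma msum_total (S : Setup e k Ω InvP) (M : Multiset Ω) :
    ∑ i, msum M i = Multiset.card M * (e * k) := by
  induction M using Multiset.induction_on with
  | empty => simp
  | cons a M ih =>
    simp only [msum_cons, Multiset.card_cons]
    rw [Finset.sum_add_distrib, ih, mem_sum S a]
    ring

lemma quad_ker {x y z w : Ω} (h : ∀ i, x.1 i + y.1 i = z.1 i + w.1 i) :
    phi (X x * X y - X z * X w : MvPolynomial Ω ℂ) = 0 := by
  have hX : ∀ a : Ω, phi (X a : MvPolynomial Ω ℂ) = monomial (toF a.1) 1 := fun a => by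
    rw [phi, aeval_X, f_eq]
  rw [map_sub, map_mul, map_mul, hX, hX, hX, hX, monomial_mul, monomial_mul, one_mul]
  have he : toF x.1 + toF y.1 = toF z.1 + toF w.1 := by
    ext i
    simp [Finsupp.add_apply, h i]
  rw [he, sub_self]

lemma quad_homog (x y z w : Ω) :
    (X x * X y - X z * X w : MvPolynomial Ω ℂ).IsHomogeneous 2 := by
  have h2 : ∀ a b : Ω, (X a * X b : MvPolynomial Ω ℂ).IsHomogeneous 2 := fun a b => by
    have := (isHomogeneous_X ℂ a).mul (isHomogeneous_X ℂ b)
    simpa using this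
  exact (h2 x y).sub (h2 z w)

lemma rel_span {M N : Multiset Ω} (h : Rel M N) :
    (M.map X).prod - (N.map X).prod ∈
      Ideal.span {p : MvPolynomial Ω ℂ | p ∈ RingHom.ker (phi (Ω := Ω)) ∧
        p.IsHomogeneous 2} := by
  induction h with
  | refl => rw [sub_self]; exact Ideal.zero_mem _
  | @tail B C hMB hstep ih =>
    obtain ⟨D, x, y, z, w, rfl, rfl, hsum⟩ := hstep
    have hq : (X x * X y - X z * X w : MvPolynomial Ω ℂ) ∈
        {p : MvPolynomial Ω ℂ | p ∈ RingHom.ker (phi (Ω := Ω)) ∧ p.IsHomogeneous 2} :=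
      ⟨RingHom.mem_ker.mpr (quad_ker hsum), quad_homog x y z w⟩
    have hdiff : ((x ::ₘ y ::ₘ D).map X).prod - ((z ::ₘ w ::ₘ D).map X).prod
        = (X x * X y - X z * X w) * ((D.map X).prod : MvPolynomial Ω ℂ) := by
      simp only [Multiset.map_cons, Multiset.prod_cons]
      ring
    have hmem : ((x ::ₘ y ::ₘ D).map X).prod - ((z ::ₘ w ::ₘ D).map X).prod ∈
        Ideal.span {p : MvPolynomial Ω ℂ | p ∈ RingHom.ker (phi (Ω := Ω)) ∧
          p.IsHomogeneous 2} := by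
      rw [hdiff]
      exact Ideal.mul_mem_right _ _ (Ideal.subset_span hq)
    have := Ideal.add_mem _ ih hmem
    simpa using this

/-- The toric ideal is generated by quadrics. -/
theorem gen_by_quadrics (S : Setup e k Ω InvP) :
    RingHom.ker (phi (Ω := Ω)) =
      Ideal.span {p : MvPolynomial Ω ℂ | p ∈ RingHom.ker (phi (Ω := Ω)) ∧
        p.IsHomogeneous 2} := by
  classical
  apply le_antisymm ?_ (Ideal.span_le.mpr fun p hp => hp.1)
  suffices H : ∀ (n : ℕ) (p : MvPolynomial Ω ℂ), p ∈ RingHom.ker (phi (Ω := Ω)) →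
      p.support.card ≤ n → p ∈ Ideal.span {p : MvPolynomial Ω ℂ |
        p ∈ RingHom.ker (phi (Ω := Ω)) ∧ p.IsHomogeneous 2} by
    intro p hp
    exact H p.support.card p hp le_rfl
  intro n
  induction n with
  | zero =>
    intro p _ hn
    have h0 : p.support = ∅ := Finset.card_eq_zero.mp (Nat.le_zero.mp hn)
    rw [MvPolynomial.support_eq_empty.mp h0]
    exact Ideal.zero_mem _
  | succ n ih =>
    intro p hp hn
    by_cases hp0 : p = 0
    · rw [hp0]; exact Ideal.zero_mem _
    obtain ⟨ν₀, hν₀⟩ := Finset.nonempty_iff_ne_empty.mpr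
      (fun h => hp0 (MvPolynomial.support_eq_empty.mp h))
    have hps : phi p = ∑ ν ∈ p.support, monomial (SF ν) (coeff ν p) := by
      conv_lhs => rw [p.as_sum]
      rw [map_sum]
      exact Finset.sum_congr rfl fun ν _ => phi_monomial ν _
    have h0 : coeff (SF ν₀) (phi p) = 0 := by
      rw [RingHom.mem_ker.mp hp]
      simp
    have hco : ∑ ν ∈ p.support, (if SF ν = SF ν₀ then coeff ν p else 0) = 0 := by
      have h1 := h0
      rw [hps, MvPolynomial.coeff_sum] at h1
      refine Eq.trans (Finset.sum_congr rfl fun ν _ => ?_) h1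
      rw [coeff_monomial]
    have hsum : ∑ ν ∈ p.support.filter (fun ν => SF ν = SF ν₀), coeff ν p = 0 := by
      rw [Finset.sum_filter]
      exact hco
    have hν₀f : ν₀ ∈ p.support.filter (fun ν => SF ν = SF ν₀) :=
      Finset.mem_filter.mpr ⟨hν₀, rfl⟩
    have hc0 : coeff ν₀ p ≠ 0 := MvPolynomial.mem_support_iff.mp hν₀
    obtain ⟨ν₁, hν₁f, hν₁ne⟩ : ∃ ν₁ ∈ p.support.filter (fun ν => SF ν = SF ν₀), ν₁ ≠ ν₀ := by
      by_contra hcon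
      push_neg at hcon
      have hsing : p.support.filter (fun ν => SF ν = SF ν₀) = {ν₀} :=
        Finset.eq_singleton_iff_unique_mem.mpr ⟨hν₀f, hcon⟩
      rw [hsing, Finset.sum_singleton] at hsum
      exact hc0 hsum
    have hSF : SF ν₁ = SF ν₀ := (Finset.mem_filter.mp hν₁f).2
    have hν₁sup : ν₁ ∈ p.support := (Finset.mem_filter.mp hν₁f).1
    -- the binomial
    set b : MvPolynomial Ω ℂ := monomial ν₀ 1 - monomial ν₁ 1 with hb
    have hbker : b ∈ RingHom.ker (phi (Ω := Ω)) := by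
      rw [RingHom.mem_ker, hb, map_sub, phi_monomial, phi_monomial, hSF, sub_self]
    have hbspan : b ∈ Ideal.span {p : MvPolynomial Ω ℂ |
        p ∈ RingHom.ker (phi (Ω := Ω)) ∧ p.IsHomogeneous 2} := by
      have hms : ∀ l, msum ν₀.toMultiset l = msum ν₁.toMultiset l := by
        intro l
        rw [← SF_apply_msum, ← SF_apply_msum]
        rw [show ((ν₁.toMultiset.map fun a => toF a.1).sum) = SF ν₁ from rfl,
          show ((ν₀.toMultiset.map fun a => toF a.1).sum) = SF ν₀ from rfl, hSF]
      have hcards : Multiset.card ν₀.toMultiset = Multiset.card ν₁.toMultiset := by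
        have h1 := msum_total S ν₀.toMultiset
        have h2 := msum_total S ν₁.toMultiset
        have h3 : ∑ i, msum ν₀.toMultiset i = ∑ i, msum ν₁.toMultiset i :=
          Finset.sum_congr rfl fun i _ => hms i
        have hek : 0 < e * k := Nat.mul_pos S.he (by have := S.hk; omega)
        have := h1.symm.trans (h3.trans h2)
        exact Nat.eq_of_mul_eq_mul_right hek this
      have hrel : Rel ν₀.toMultiset ν₁.toMultiset := conn S _ _ hcards hms
      have := rel_span hrel
      rw [hb, monomial_eq_monoM, monomial_eq_monoM]
      exact this
    set p' : MvPolynomial Ω ℂ := p - C (coeff ν₀ p) * b with hp'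
    have hp'ker : p' ∈ RingHom.ker (phi (Ω := Ω)) := by
      rw [hp']
      exact sub_mem hp (Ideal.mul_mem_left _ _ hbker)
    have hsubset : p'.support ⊆ p.support.erase ν₀ := by
      intro ν hν
      have hcν : coeff ν p' ≠ 0 := MvPolynomial.mem_support_iff.mp hν
      have hcalc : coeff ν p' = coeff ν p - coeff ν₀ p *
          ((if ν₀ = ν then (1:ℂ) else 0) - (if ν₁ = ν then (1:ℂ) else 0)) := by
        rw [hp', hb]
        rw [coeff_sub, coeff_C_mul, coeff_sub, coeff_monomial, coeff_monomial]
      rw [Finset.mem_erase]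
      by_cases hνν₀ : ν = ν₀
      · exfalso
        apply hcν
        rw [hcalc, hνν₀]
        rw [if_pos rfl, if_neg hν₁ne]
        ring
      refine ⟨hνν₀, ?_⟩
      by_cases hνν₁ : ν = ν₁
      · rw [hνν₁]; exact hν₁sup
      rw [MvPolynomial.mem_support_iff]
      intro hc
      apply hcν
      rw [hcalc, hc, if_neg (fun h => hνν₀ h.symm), if_neg (fun h => hνν₁ h.symm)]
      ring
    have hcard' : p'.support.card ≤ n := by
      have h1 := Finset.card_le_card hsubset
      have h2 : (p.support.erase ν₀).card = p.support.card - 1 :=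
        Finset.card_erase_of_mem hν₀
      omega
    have hp'span := ih p' hp'ker hcard'
    have hpeq : p = p' + C (coeff ν₀ p) * b := by rw [hp']; ring
    rw [hpeq]
    exact Ideal.add_mem _ hp'span (Ideal.mul_mem_left _ _ hbspan)

end Stmt10Aux

/-- for a finite non-cyclic diagonal abelian group `G ⊆ GL(3,ℂ)` of order
`d`, the toric ideal of the set of `G`-invariant exponent vectors of degree `d` is
generated by quadrics. -/
theorem stmt10 (G : Subgroup (Fin 3 → ℂˣ)) [Finite G] (hG : ¬ IsCyclic G) :
    genByQuadrics ℂ (n := 2) {a : Fin 3 → ℕ |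
        (∀ g ∈ G, ∏ i, (g i) ^ (a i) = 1) ∧ ∑ i, a i = Nat.card G} := by
  classical
  set e : ℕ := Monoid.exponent G with he_def
  have he : 0 < e := Monoid.ExponentExists.exponent_pos (Monoid.ExponentExists.of_finite)
  have hd : 0 < Nat.card G := Nat.card_pos
  obtain ⟨k, hk⟩ : e ∣ Nat.card G := Group.exponent_dvd_nat_card
  have hkne : e ≠ Nat.card G := by
    intro h
    exact hG (IsCyclic.of_exponent_eq_card h)
  have hk2 : 2 ≤ k := by
    rcases Nat.lt_or_ge k 2 with h | h
    · interval_cases k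
      · omega
      · omega
    · exact h
  -- the invariance predicate
  set InvP : (Fin 3 → ℕ) → Prop := fun a => ∀ g ∈ G, ∏ i, (g i) ^ (a i) = 1 with hInvP
  have hge : ∀ (g : Fin 3 → ℂˣ), g ∈ G → ∀ i, (g i) ^ e = 1 := by
    intro g hg i
    have h1 : (⟨g, hg⟩ : G) ^ e = 1 := Monoid.pow_exponent_eq_one _
    have h2 : (g : Fin 3 → ℂˣ) ^ e = 1 := by
      have := congrArg Subtype.val h1
      simpa using this
    have := congrFun h2 i
    simpa using this
  have hpow : ∀ (x : ℂˣ), x ^ e = 1 → ∀ a b : ℕ, a % e = b % e → x ^ a = x ^ b := by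
    intro x hx a b hab
    have hred : ∀ c : ℕ, x ^ c = x ^ (c % e) := by
      intro c
      conv_lhs => rw [← Nat.div_add_mod c e]
      rw [pow_add, pow_mul, hx, one_pow, one_mul]
    rw [hred a, hred b, hab]
  have S : Stmt10Aux.Setup e k {a : Fin 3 → ℕ |
      (∀ g ∈ G, ∏ i, (g i) ^ (a i) = 1) ∧ ∑ i, a i = Nat.card G} InvP := by
    constructor
    · exact he
    · exact hk2
    · intro a
      rw [hk]
      exact Iff.rfl
    · intro a b ha hb g hg
      have h1 : ∀ i : Fin 3, (g i) ^ (a i + b i) = (g i) ^ (a i) * (g i) ^ (b i) :=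
        fun i => pow_add _ _ _
      rw [Finset.prod_congr rfl fun i _ => h1 i, Finset.prod_mul_distrib,
        ha g hg, hb g hg, one_mul]
    · intro a b hab ha g hg
      have h1 : ∀ i : Fin 3, (g i) ^ (b i) = (g i) ^ (a i) :=
        fun i => hpow (g i) (hge g hg i) _ _ (hab i).symm
      rw [Finset.prod_congr rfl fun i _ => h1 i]
      exact ha g hg
    · intro g hg
      simp
  exact Stmt10Aux.gen_by_quadrics S
end

section
/- Let d ≥ 2 and let ρ : Fin (n+1) → ℕ be weights with ρ 0 = 0, ρ l < d for all l, and gcd(ρ 1, …, ρ n, d) = 1 (so that the cyclic group ⟨diag(e^{ρ 0},…,e^{ρ n})⟩ has order d), and let Ω = Ω(d, ρ). Suppose there are indices i, j, k with ρ i < ρ j < ρ k such that, setting α₁ = ρ j − ρ i, α₂ = ρ k − ρ i, g = gcd(α₁, d), d' = d/g, α₁' = α₁/g, and λ the unique integer with 0 < λ ≤ d' and d' ∣ (α₂ − λ·α₁'), one has g · gcd(λ, d') · gcd(λ − g, d') = 1. Then the toric ideal I(Ω) is NOT generated by quadrics, i.e. I(Ω) is strictly larger than the ideal generated by its homogeneous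 elements of degree 2. -/
open MvPolynomial

lemma exists_triple (d lam : ℕ) (hd : 2 ≤ d) (hlam2 : 2 ≤ lam) (hlamlt : lam < d)
    (hco : Nat.Coprime lam d) (hco1 : Nat.Coprime (lam - 1) d) :
    ∃ t1 u1 t2 u2 t3 u3 : ℕ,
      t1 + t2 + t3 = d ∧ u1 + u2 + u3 = d ∧
      t1 + u1 + 1 = d ∧ t2 + u2 ≤ d ∧ t3 + u3 ≤ d ∧
      ((d:ℤ) ∣ (lam * t1 + u1 : ℤ)) ∧ ((d:ℤ) ∣ (lam * t2 + u2 : ℤ)) ∧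
      ((d:ℤ) ∣ (lam * t3 + u3 : ℤ)) := by
  classical
  have hdpos : (0:ℤ) < d := by exact_mod_cast Nat.lt_of_lt_of_le Nat.zero_lt_two hd
  have hic1 : IsCoprime ((lam:ℤ) - 1) (d:ℤ) := by
    rw [Int.isCoprime_iff_gcd_eq_one]
    have h : ((lam:ℤ) - 1) = ((lam - 1 : ℕ) : ℤ) := by
      have : 1 ≤ lam := by omega
      push_cast [this]; ring
    rw [h, Int.gcd_natCast_natCast]
    exact hco1
  obtain ⟨uu, vv, huv⟩ := hic1
  set w : ℤ := uu % d with hw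
  have hw0 : 0 ≤ w := Int.emod_nonneg _ (by positivity)
  have hwd : w < d := Int.emod_lt_of_pos _ hdpos
  set ν : ℕ := w.toNat with hν
  have hνw : (ν : ℤ) = w := Int.toNat_of_nonneg hw0
  have hkey : (d:ℤ) ∣ ((lam:ℤ) - 1) * ν - 1 := by
    have h1 : (d:ℤ) ∣ (uu - w) :=
      ⟨uu / d, by have h := Int.mul_ediv_add_emod uu d; rw [hw]; linarith⟩
    have h2 : ((lam:ℤ) - 1) * ν - 1 = -(((lam:ℤ)-1) * (uu - w)) - vv * d := by
      rw [hνw]; linear_combination huv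
    rw [h2]
    exact dvd_sub (dvd_neg.mpr (h1.mul_left _)) ⟨vv, mul_comm _ _⟩
  have hν1 : 1 ≤ ν := by
    rcases Nat.eq_zero_or_pos ν with h | h
    · exfalso
      rw [h] at hkey
      simp at hkey
      have := Int.le_of_dvd one_pos hkey
      omega
    · exact h
  have hνd2 : ν ≤ d - 2 := by
    by_contra h
    have hνeq : ν = d - 1 := by omega
    have h2 : (d:ℤ) ∣ (lam:ℤ) := by
      have hv : (ν:ℤ) = (d:ℤ) - 1 := by rw [hνeq]; omega
      have e1 : ((lam:ℤ) - 1) * ν - 1 = ((lam:ℤ)-1)*d - (lam:ℤ) := by rw [hv]; ring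
      have h4 := hkey
      rw [e1] at h4
      have h3 : (d:ℤ) ∣ ((lam:ℤ)-1)*d := ⟨(lam:ℤ)-1, mul_comm _ _⟩
      simpa using dvd_sub h3 h4
    have hh : d ∣ lam := by exact_mod_cast h2
    have := Nat.le_of_dvd (by omega) hh
    omega
  have hB : (d:ℤ) ∣ (lam:ℤ) * ν - ν - 1 := by
    have h : (lam:ℤ) * ν - ν - 1 = ((lam:ℤ) - 1) * ν - 1 := by ring
    rw [h]; exact hkey
  have hpig : ∃ t, 1 ≤ t ∧ t ≤ d - 1 - ν ∧ d - ν ≤ (lam * t) % d := by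
    by_contra hcon
    push_neg at hcon
    have hIv : ∀ t, 1 ≤ t → t ≤ d - 1 - ν → 1 ≤ (lam * t) % d ∧ (lam * t) % d ≤ d - 1 - ν := by
      intro t h1 h2
      have hne : (lam * t) % d ≠ 0 := by
        intro h0
        have hd1 : d ∣ lam * t := Nat.dvd_of_mod_eq_zero h0
        have hd2 : d ∣ t := Nat.Coprime.dvd_of_dvd_mul_left (Nat.Coprime.symm hco) hd1
        have := Nat.le_of_dvd (by omega) hd2
        omega
      have := hcon t h1 h2
      omega
    set I : Finset ℕ := Finset.Icc 1 (d - 1 - ν) with hI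
    have hmaps : ∀ a ∈ I, (lam * a) % d ∈ I := by
      intro a ha
      rw [hI, Finset.mem_Icc] at *
      exact hIv a ha.1 ha.2
    have hinj : ∀ a₁ ∈ I, ∀ a₂ ∈ I, (lam * a₁) % d = (lam * a₂) % d → a₁ = a₂ := by
      intro a₁ h₁ a₂ h₂ heq
      rw [hI, Finset.mem_Icc] at h₁ h₂
      have hm : Nat.ModEq d (lam * a₁) (lam * a₂) := heq
      have h3 : a₁ % d = a₂ % d :=
        Nat.ModEq.cancel_left_of_coprime (by rwa [Nat.coprime_comm] at hco) hm
      rw [Nat.mod_eq_of_lt (by omega), Nat.mod_eq_of_lt (by omega)] at h3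
      exact h3
    have hsurj := Finset.surj_on_of_inj_on_of_card_le (s := I) (t := I)
      (fun a _ => (lam * a) % d) (fun a ha => hmaps a ha)
      (fun a₁ a₂ h₁ h₂ h => hinj a₁ h₁ a₂ h₂ h) le_rfl
    have htarget : d - 1 - ν ∈ I := by
      rw [hI, Finset.mem_Icc]; omega
    obtain ⟨t, htI, hteq⟩ := hsurj _ htarget
    have hteq' : d - 1 - ν = lam * t % d := hteq
    rw [hI, Finset.mem_Icc] at htI
    have hcast : (d:ℤ) * ((lam * t / d : ℕ) : ℤ) + ((lam * t % d : ℕ) : ℤ) = (lam:ℤ) * t := by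
      exact_mod_cast congrArg (Nat.cast : ℕ → ℤ) (Nat.div_add_mod (lam * t) d)
    have hA : (d:ℤ) ∣ (lam:ℤ) * t - ((d:ℤ) - 1 - ν) := by
      have h2 : ((lam * t % d : ℕ) : ℤ) = (d:ℤ) - 1 - ν := by
        rw [← hteq']
        push_cast
        omega
      exact ⟨((lam * t / d : ℕ) : ℤ), by linarith⟩
    have hC : (d:ℤ) ∣ (lam:ℤ) * ((t:ℤ) - ((d:ℤ) - ν)) := by
      have e : (lam:ℤ) * ((t:ℤ) - ((d:ℤ) - ν)) =
          ((lam:ℤ) * t - ((d:ℤ) - 1 - ν)) + ((lam:ℤ) * ν - ν - 1) + ((d:ℤ) - lam * d) := by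
        ring
      rw [e]
      exact dvd_add (dvd_add hA hB) (dvd_sub (dvd_refl _) ⟨(lam:ℤ), mul_comm _ _⟩)
    have hiclam : IsCoprime (lam:ℤ) (d:ℤ) := by
      rw [Int.isCoprime_iff_gcd_eq_one, Int.gcd_natCast_natCast]; exact hco
    have hD : (d:ℤ) ∣ ((t:ℤ) - ((d:ℤ) - ν)) := hiclam.symm.dvd_of_dvd_mul_left hC
    have hz : (t:ℤ) - ((d:ℤ) - ν) = 0 := by
      refine Int.eq_zero_of_abs_lt_dvd hD ?_
      have h1 : (t:ℤ) ≤ (d:ℤ) - 1 - ν := by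
        have := htI.2
        omega
      have h2 : (1:ℤ) ≤ t := by exact_mod_cast htI.1
      have h3 : (ν:ℤ) ≤ (d:ℤ) - 2 := by
        have := hνd2
        omega
      rw [abs_lt]
      constructor <;> omega
    have h1 : (t:ℤ) ≤ (d:ℤ) - 1 - ν := by
      have := htI.2
      omega
    have h3 : (1:ℤ) ≤ ν := by exact_mod_cast hν1
    omega
  obtain ⟨t2, ht21, ht22, ht23⟩ := hpig
  set r : ℕ := (lam * t2) % d with hr
  have hrd : r < d := Nat.mod_lt _ (by omega)
  set u2 : ℕ := d - r with hu2
  have hu21 : 1 ≤ u2 := by omega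
  have hu22 : u2 ≤ ν := by omega
  have hcast2 : (d:ℤ) * ((lam * t2 / d : ℕ) : ℤ) + (r : ℤ) = (lam:ℤ) * t2 := by
    rw [hr]
    exact_mod_cast congrArg (Nat.cast : ℕ → ℤ) (Nat.div_add_mod (lam * t2) d)
  have hdvd2 : (d:ℤ) ∣ ((lam:ℤ) * t2 + u2) := by
    have hu2c : (u2:ℤ) = (d:ℤ) - r := by rw [hu2]; omega
    exact ⟨((lam * t2 / d : ℕ) : ℤ) + 1, by linarith⟩
  refine ⟨ν, d - 1 - ν, t2, u2, d - ν - t2, ν + 1 - u2, by omega, by omega, by omega, by omega,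
    by omega, ?_, hdvd2, ?_⟩
  · have hc : ((d - 1 - ν : ℕ) : ℤ) = (d:ℤ) - 1 - ν := by omega
    have e : (lam:ℤ) * ν + ((d:ℤ) - 1 - ν) = ((lam:ℤ) * ν - ν - 1) + d := by ring
    rw [hc, e]
    exact dvd_add hB (dvd_refl _)
  · have e1 : ((d - ν - t2 : ℕ) : ℤ) = (d:ℤ) - ν - t2 := by omega
    have e2 : ((ν + 1 - u2 : ℕ) : ℤ) = (ν:ℤ) + 1 - u2 := by omega
    rw [e1, e2]
    have e : (lam:ℤ) * ((d:ℤ) - ν - t2) + ((ν:ℤ) + 1 - u2) =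
        (lam:ℤ) * d - ((lam:ℤ) * ν - ν - 1) - ((lam:ℤ) * t2 + u2) := by ring
    rw [e]
    exact dvd_sub (dvd_sub ⟨(lam:ℤ), mul_comm _ _⟩ hB) hdvd2

lemma finsupp_degree_two {τ : Type*} (m : τ →₀ ℕ) (h : m.degree = 2) :
    ∃ a b : τ, m = Finsupp.single a 1 + Finsupp.single b 1 := by
  classical
  have hsum : ∑ a ∈ m.support, m a = 2 := h
  have hcard : m.support.card ≤ 2 := by
    calc m.support.card = m.support.card • 1 := by simp
    _ ≤ ∑ a ∈ m.support, m a :=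
        Finset.card_nsmul_le_sum _ _ _ (fun a ha => Nat.one_le_iff_ne_zero.mpr
          (Finsupp.mem_support_iff.mp ha))
    _ = 2 := hsum
  interval_cases hc : m.support.card
  · exfalso
    have : m = 0 := Finsupp.support_eq_empty.mp (Finset.card_eq_zero.mp hc)
    rw [this] at hsum; simp at hsum
  · obtain ⟨a, ha⟩ := Finset.card_eq_one.mp hc
    have hm : m = Finsupp.single a (m a) :=
      Finsupp.support_subset_singleton.mp (ha ▸ Finset.Subset.refl _)
    have hma : m a = 2 := by
      rw [ha] at hsum; simpa using hsum
    refine ⟨a, a, ?_⟩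
    rw [hm, hma, ← Finsupp.single_add]
  · obtain ⟨a, b, hab, hs⟩ := Finset.card_eq_two.mp hc
    have hma : m a ≠ 0 := Finsupp.mem_support_iff.mp (hs ▸ by simp)
    have hmb : m b ≠ 0 := Finsupp.mem_support_iff.mp (hs ▸ by simp)
    have hsum2 : m a + m b = 2 := by
      rw [hs] at hsum
      rwa [Finset.sum_insert (by simp [hab]), Finset.sum_singleton] at hsum
    have h1 : m a = 1 := by omega
    have h2 : m b = 1 := by omega
    refine ⟨a, b, ?_⟩
    ext c
    by_cases hca : c = a
    · subst hca; simp [Finsupp.single_apply, hab.symm, h1, Ne.symm hab]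
    · by_cases hcb : c = b
      · subst hcb; simp [Finsupp.single_apply, hab, h2, Ne.symm, hca]
      · have : c ∉ m.support := by rw [hs]; simp [hca, hcb]
        simp [Finsupp.notMem_support_iff.mp this, Finsupp.single_apply, Ne.symm hca, Ne.symm hcb]

lemma mainAux (K : Type*) [Field K] {n : ℕ} (Ω : Set (Fin (n + 1) → ℕ))
    (C : Set (Fin (n + 1) → ℕ))
    (hpair : ∀ a b a' b' : Ω, a.1 ∈ C → b.1 ∈ C →
      (∀ l, a'.1 l + b'.1 l = a.1 l + b.1 l) →
      (a' = a ∧ b' = b) ∨ (a' = b ∧ b' = a))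
    (x1 x2 x3 y1 y2 y3 : Ω)
    (hsum : ∀ l, x1.1 l + x2.1 l + x3.1 l = y1.1 l + y2.1 l + y3.1 l)
    (hx1 : x1.1 ∈ C) (hx2 : x2.1 ∈ C) (hx3 : x3.1 ∈ C) (hy1 : y1.1 ∉ C) :
    ¬ genByQuadrics K Ω := by
  classical
  intro hgen
  set π : MvPolynomial Ω K →ₐ[K] MvPolynomial (Fin (n + 1)) K :=
    aeval (R := K) fun a : Ω => ∏ i, (X i : MvPolynomial (Fin (n + 1)) K) ^ (a.1 i) with hπdef
  set c : Ω → K := fun a => if a.1 ∈ C then 1 else 0 with hcdef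
  set χ : MvPolynomial Ω K →ₐ[K] K := aeval (R := K) c with hχdef
  -- the exponent-sum map
  set Ψ : (Ω →₀ ℕ) → (Fin (n + 1) →₀ ℕ) :=
    fun m => m.sum fun a e => e • Finsupp.equivFunOnFinite.symm a.1 with hΨdef
  have hΨadd : ∀ m m' : Ω →₀ ℕ, Ψ (m + m') = Ψ m + Ψ m' := by
    intro m m'
    simp only [hΨdef]
    exact Finsupp.sum_add_index' (fun a => by simp) (fun a b1 b2 => add_smul _ _ _)
  have hΨsingle : ∀ (a : Ω) (e : ℕ), Ψ (Finsupp.single a e) = e • Finsupp.equivFunOnFinite.symm a.1 := by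
    intro a e
    simp only [hΨdef]
    exact Finsupp.sum_single_index (by simp)
  -- π of a monomial
  have hmono : ∀ (m : Ω →₀ ℕ) (r : K), π (monomial m r) = monomial (Ψ m) r := by
    intro m r
    have hX : ∀ a : Ω, (∏ i, (X i : MvPolynomial (Fin (n + 1)) K) ^ (a.1 i))
        = monomial (Finsupp.equivFunOnFinite.symm a.1) 1 := by
      intro a
      rw [monomial_eq, C_1, one_mul, Finsupp.prod_fintype _ _ (fun i => pow_zero _)]
      exact Finset.prod_congr rfl fun l _ => by
        rw [Finsupp.coe_equivFunOnFinite_symm]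
    have hprod : ∀ s : Finset Ω, ∀ g : Ω → (Fin (n + 1) →₀ ℕ),
        (∏ a ∈ s, (monomial (g a) (1 : K))) = monomial (∑ a ∈ s, g a) 1 := by
      intro s
      induction s using Finset.induction_on with
      | empty => intro g; simp [monomial_zero']
      | insert _ _ hx ih =>
        intro g
        rw [Finset.prod_insert hx, Finset.sum_insert hx, ih, monomial_mul, one_mul]
    rw [aeval_monomial]
    have : (m.prod fun (a : Ω) (e : ℕ) =>
        (∏ i, (X i : MvPolynomial (Fin (n + 1)) K) ^ (a.1 i)) ^ e) = monomial (Ψ m) 1 := by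
      rw [Finsupp.prod]
      have : ∀ a ∈ m.support, (∏ i, (X i : MvPolynomial (Fin (n + 1)) K) ^ (a.1 i)) ^ (m a)
          = monomial ((m a) • Finsupp.equivFunOnFinite.symm a.1) 1 := by
        intro a _
        rw [hX a, monomial_pow, one_pow]
      rw [Finset.prod_congr rfl this, hprod]
      rfl
    rw [this, algebraMap_eq, C_mul_monomial, mul_one]
  -- kill: χ vanishes on homogeneous degree-2 elements of the toric ideal
  have kill : ∀ q : MvPolynomial Ω K, q ∈ toricIdeal K Ω → q.IsHomogeneous 2 → χ q = 0 := by
    intro q hq hh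
    have hq0 : π q = 0 := hq
    have hdeg : ∀ m ∈ q.support, (m : Ω →₀ ℕ).degree = 2 := by
      intro m hm
      rw [Finsupp.degree_eq_weight_one]
      exact hh (MvPolynomial.mem_support_iff.mp hm)
    have hχq : χ q = ∑ m ∈ q.support, coeff m q * ∏ a ∈ m.support, (c a) ^ (m a) := by
      rw [hχdef, aeval_def, eval₂_eq]
      exact Finset.sum_congr rfl fun m _ => by
        rw [Algebra.algebraMap_self, RingHom.id_apply]
    rw [hχq]
    apply Finset.sum_eq_zero
    intro m hm
    by_cases hS : ∀ a ∈ m.support, a.1 ∈ C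
    · -- all variables marked: coefficient must vanish
      suffices hcz : coeff m q = 0 by rw [hcz, zero_mul]
      obtain ⟨a, b, hab⟩ := finsupp_degree_two m (hdeg m hm)
      have hamem : a ∈ m.support := by
        rw [hab]; simp [Finsupp.mem_support_iff, Finsupp.single_apply]
      have hbmem : b ∈ m.support := by
        rw [hab]; simp [Finsupp.mem_support_iff, Finsupp.single_apply]
      have haC : a.1 ∈ C := hS a hamem
      have hbC : b.1 ∈ C := hS b hbmem
      -- the fiber of Ψ m in q.support is {m}
      have hfiber : ∀ m' ∈ q.support, m' ≠ m → Ψ m' ≠ Ψ m := by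
        intro m' hm' hne hΨeq
        apply hne
        obtain ⟨a', b', hab'⟩ := finsupp_degree_two m' (hdeg m' hm')
        have hpt : ∀ l, a'.1 l + b'.1 l = a.1 l + b.1 l := by
          intro l
          have h1 : Ψ m' = Finsupp.equivFunOnFinite.symm a'.1 + Finsupp.equivFunOnFinite.symm b'.1 := by
            rw [hab', hΨadd, hΨsingle, hΨsingle, one_smul, one_smul]
          have h2 : Ψ m = Finsupp.equivFunOnFinite.symm a.1 + Finsupp.equivFunOnFinite.symm b.1 := by
            rw [hab, hΨadd, hΨsingle, hΨsingle, one_smul, one_smul]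
          have heq2 : Finsupp.equivFunOnFinite.symm a'.1 + Finsupp.equivFunOnFinite.symm b'.1
              = Finsupp.equivFunOnFinite.symm a.1 + Finsupp.equivFunOnFinite.symm b.1 := by
            rw [← h1, ← h2]; exact hΨeq
          simpa [Finsupp.add_apply] using DFunLike.congr_fun heq2 l
        rcases hpair a b a' b' haC hbC hpt with ⟨h1, h2⟩ | ⟨h1, h2⟩
        · rw [hab', hab, h1, h2]
        · rw [hab', hab, h1, h2]; exact add_comm _ _
      have hcoeffΨ : coeff (Ψ m) (π q) = coeff m q := by
        conv_lhs => rw [q.as_sum, map_sum]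
        have hrw : ∑ x ∈ q.support, π (monomial x (coeff x q))
            = ∑ x ∈ q.support, monomial (Ψ x) (coeff x q) :=
          Finset.sum_congr rfl fun m' _ => hmono m' _
        rw [hrw, coeff_sum]
        rw [Finset.sum_eq_single m
          (fun b hb hbne => by rw [coeff_monomial, if_neg (hfiber b hb hbne)])
          (fun hnot => by
            rw [coeff_monomial, if_pos rfl]
            exact MvPolynomial.notMem_support_iff.mp hnot)]
        rw [coeff_monomial, if_pos rfl]
      rw [← hcoeffΨ, hq0, coeff_zero]
    · push_neg at hS
      obtain ⟨a, ha, haC⟩ := hS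
      have : ∏ a ∈ m.support, (c a) ^ (m a) = 0 :=
        Finset.prod_eq_zero ha (by
          rw [hcdef]; simp only [haC, if_false]
          exact zero_pow (Finsupp.mem_support_iff.mp ha))
      rw [this, mul_zero]
  -- the cubic witness
  set cub : MvPolynomial Ω K := X x1 * X x2 * X x3 - X y1 * X y2 * X y3 with hcubdef
  have hcubmem : cub ∈ toricIdeal K Ω := by
    show π cub = 0
    rw [hcubdef, map_sub, map_mul, map_mul, map_mul, map_mul, aeval_X, aeval_X, aeval_X,
      aeval_X, aeval_X, aeval_X, sub_eq_zero, ← Finset.prod_mul_distrib, ← Finset.prod_mul_distrib,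
      ← Finset.prod_mul_distrib, ← Finset.prod_mul_distrib]
    exact Finset.prod_congr rfl fun l _ => by rw [← pow_add, ← pow_add, ← pow_add, ← pow_add, hsum l]
  have hker : cub ∈ RingHom.ker χ.toRingHom := by
    rw [genByQuadrics] at hgen
    rw [hgen] at hcubmem
    refine Ideal.span_le.mpr ?_ hcubmem
    intro q hq
    exact kill q hq.1 hq.2
  have hval : χ cub = 0 := hker
  rw [hcubdef, map_sub, map_mul, map_mul, map_mul, map_mul, aeval_X, aeval_X, aeval_X,
    aeval_X, aeval_X, aeval_X] at hval
  rw [hcdef] at hval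
  simp only [hx1, hx2, hx3, if_true, hy1, if_false, mul_zero, zero_mul, sub_zero, mul_one] at hval
  exact one_ne_zero hval

/-- for weights `ρ` with `ρ 0 = 0`, all `ρ l < d` and
`gcd(ρ 0, …, ρ n, d) = 1`, if there are indices `i, j, k` with `ρ i < ρ j < ρ k` such that
the gcd-condition for `α₁ = ρ j − ρ i`, `α₂ = ρ k − ρ i` attains its minimum value 1, then
the toric ideal of `Ω(d, ρ)` is not generated by quadrics. -/
theorem stmt14 (K : Type*) [Field K] (n d : ℕ) (hd : 2 ≤ d)
    (ρ : Fin (n + 1) → ℕ) (hρ0 : ρ 0 = 0) (hρd : ∀ l, ρ l < d)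
    (hgcd : Nat.gcd (Finset.univ.gcd ρ) d = 1)
    (i j k : Fin (n + 1)) (hij : ρ i < ρ j) (hjk : ρ j < ρ k)
    (lam : ℕ) (hlam0 : 0 < lam) (hlamle : lam ≤ d / Nat.gcd (ρ j - ρ i) d)
    (hlamdvd : ((d / Nat.gcd (ρ j - ρ i) d : ℕ) : ℤ) ∣
        (((ρ k - ρ i : ℕ) : ℤ) -
          (lam : ℤ) * (((ρ j - ρ i) / Nat.gcd (ρ j - ρ i) d : ℕ) : ℤ)))
    (heq : Nat.gcd (ρ j - ρ i) d *
        Int.gcd (lam : ℤ) ((d / Nat.gcd (ρ j - ρ i) d : ℕ) : ℤ) *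
        Int.gcd ((lam : ℤ) - ((Nat.gcd (ρ j - ρ i) d : ℕ) : ℤ))
          ((d / Nat.gcd (ρ j - ρ i) d : ℕ) : ℤ) = 1) :
    ¬ genByQuadrics K {a : Fin (n + 1) → ℕ | (∑ l, a l = d) ∧ d ∣ ∑ l, ρ l * a l} := by
  classical
  set Ω : Set (Fin (n + 1) → ℕ) :=
    {a : Fin (n + 1) → ℕ | (∑ l, a l = d) ∧ d ∣ ∑ l, ρ l * a l} with hΩdef
  set α1 : ℕ := ρ j - ρ i with hα1
  set α2 : ℕ := ρ k - ρ i with hα2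
  -- extract the three coprimality conditions
  have hg : Nat.gcd α1 d = 1 :=
    Nat.eq_one_of_mul_eq_one_right (Nat.eq_one_of_mul_eq_one_right heq)
  have hG1 : Int.gcd (lam : ℤ) ((d / Nat.gcd α1 d : ℕ) : ℤ) = 1 :=
    Nat.eq_one_of_mul_eq_one_left (Nat.eq_one_of_mul_eq_one_right heq)
  have hG2 : Int.gcd ((lam : ℤ) - ((Nat.gcd α1 d : ℕ) : ℤ))
      ((d / Nat.gcd α1 d : ℕ) : ℤ) = 1 := Nat.eq_one_of_mul_eq_one_left heq
  rw [hg, Nat.div_one] at hG1 hG2 hlamle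
  rw [hg, Nat.div_one, Nat.div_one] at hlamdvd
  have hco : Nat.Coprime lam d := by rwa [Int.gcd_natCast_natCast] at hG1
  have hlam2 : 2 ≤ lam := by
    by_contra h
    have h1 : lam = 1 := by omega
    rw [h1] at hG2
    simp at hG2
    omega
  have hco1 : Nat.Coprime (lam - 1) d := by
    have h : ((lam:ℤ) - ((1:ℕ):ℤ)) = ((lam - 1 : ℕ) : ℤ) := by push_cast; omega
    rw [h] at hG2
    rwa [Int.gcd_natCast_natCast] at hG2
  have hlamlt : lam < d := by
    rcases Nat.lt_or_ge lam d with h | h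
    · exact h
    · exfalso
      have h1 : lam = d := le_antisymm hlamle h
      rw [h1, Nat.Coprime, Nat.gcd_self] at hco
      omega
  -- index distinctness
  have hij' : i ≠ j := fun h => by rw [h] at hij; omega
  have hik' : i ≠ k := fun h => by rw [h] at hij; omega
  have hjk' : j ≠ k := fun h => by rw [h] at hjk; omega
  -- coprimality in ℤ
  have icα1 : IsCoprime ((α1:ℕ):ℤ) (d:ℤ) := by
    rw [Int.isCoprime_iff_gcd_eq_one, Int.gcd_natCast_natCast]; exact hg
  have icl : IsCoprime ((lam:ℕ):ℤ) (d:ℤ) := by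
    rw [Int.isCoprime_iff_gcd_eq_one, Int.gcd_natCast_natCast]; exact hco
  have icl1 : IsCoprime ((lam:ℤ) - 1) (d:ℤ) := by
    rw [Int.isCoprime_iff_gcd_eq_one]
    have h : ((lam:ℤ) - 1) = ((lam - 1 : ℕ) : ℤ) := by push_cast; omega
    rw [h, Int.gcd_natCast_natCast]; exact hco1
  obtain ⟨cc, hcc⟩ := hlamdvd
  have hccα : ((α2:ℕ):ℤ) = (lam:ℤ) * α1 + d * cc := by linarith [hcc]
  have icα2 : IsCoprime ((α2:ℕ):ℤ) (d:ℤ) := by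
    rw [hccα]
    exact (icl.mul_left icα1).add_mul_left_left cc
  have icδ : IsCoprime ((α2:ℤ) - (α1:ℤ)) (d:ℤ) := by
    have h : ((α2:ℕ):ℤ) - α1 = ((lam:ℤ) - 1) * α1 + d * cc := by rw [hccα]; ring
    rw [h]
    exact (icl1.mul_left icα1).add_mul_left_left cc
  -- the corners
  set cI : Fin (n + 1) → ℕ := fun l => if l = i then d else 0 with hcI
  set cJ : Fin (n + 1) → ℕ := fun l => if l = j then d else 0 with hcJ
  set cK : Fin (n + 1) → ℕ := fun l => if l = k then d else 0 with hcK
  -- sums of functions supported on {i,j,k}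
  have hsum3 : ∀ g : Fin (n + 1) → ℕ, (∀ l, l ≠ i → l ≠ j → l ≠ k → g l = 0) →
      ∑ l, g l = g i + g j + g k := by
    intro g hg0
    have hsub : ({i, j, k} : Finset (Fin (n + 1))) ⊆ Finset.univ := Finset.subset_univ _
    rw [← Finset.sum_subset hsub (fun x _ hx => by
      simp only [Finset.mem_insert, Finset.mem_singleton] at hx
      push_neg at hx
      exact hg0 x hx.1 hx.2.1 hx.2.2)]
    rw [Finset.sum_insert (by simp [hij', hik']), Finset.sum_insert (by simp [hjk']),
      Finset.sum_singleton]
    omega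
  -- membership of corners
  have hmemC : ∀ x : Fin (n + 1), (fun l => if l = x then d else 0) ∈ Ω := by
    intro x
    constructor
    · rw [Finset.sum_ite_eq' Finset.univ x (fun _ => d)]
      simp
    · have h : ∀ l, ρ l * (if l = x then d else 0) = if l = x then ρ x * d else 0 := by
        intro l
        by_cases hl : l = x
        · subst hl; simp
        · simp [hl]
      rw [Finset.sum_congr rfl (fun l _ => h l), Finset.sum_ite_eq' Finset.univ x
        (fun _ => ρ x * d)]
      simpa using dvd_mul_left d (ρ x)
  have hmemI : cI ∈ Ω := hmemC i
  have hmemJ : cJ ∈ Ω := hmemC j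
  have hmemK : cK ∈ Ω := hmemC k
  -- structure of general elements supported on {i,j,k}
  have hshape : ∀ v, v ∈ Ω → (∀ l, l ≠ i → l ≠ j → l ≠ k → v l = 0) →
      v i + v j + v k = d ∧ (d:ℤ) ∣ ((α1:ℕ):ℤ) * v j + ((α2:ℕ):ℤ) * v k := by
    intro v hv hv0
    obtain ⟨hv1, hv2⟩ := hv
    rw [hsum3 v hv0] at hv1
    refine ⟨hv1, ?_⟩
    have hw : ∑ l, ρ l * v l = ρ i * v i + ρ j * v j + ρ k * v k :=
      hsum3 (fun l => ρ l * v l) (fun l h1 h2 h3 => by show ρ l * v l = 0; rw [hv0 l h1 h2 h3, mul_zero])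
    rw [hw] at hv2
    have hz : (d:ℤ) ∣ ((ρ i * v i + ρ j * v j + ρ k * v k : ℕ) : ℤ) := Int.natCast_dvd_natCast.mpr hv2
    have he : ((ρ i * v i + ρ j * v j + ρ k * v k : ℕ) : ℤ) =
        (ρ i : ℤ) * d + (((α1:ℕ):ℤ) * v j + ((α2:ℕ):ℤ) * v k) := by
      have e1 : ((α1:ℕ):ℤ) = (ρ j : ℤ) - ρ i := by
        rw [hα1]; push_cast [Nat.cast_sub hij.le]; ring
      have e2 : ((α2:ℕ):ℤ) = (ρ k : ℤ) - ρ i := by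
        rw [hα2]; push_cast [Nat.cast_sub (le_of_lt (lt_trans hij hjk))]; ring
      have e3 : ((v i : ℕ):ℤ) + v j + v k = (d:ℤ) := by exact_mod_cast hv1
      push_cast
      rw [e1, e2]
      linear_combination (ρ i : ℤ) * e3
    rw [he] at hz
    exact (dvd_add_right ⟨(ρ i : ℤ), mul_comm _ _⟩).mp hz
  -- cast identities
  have e1 : ((α1:ℕ):ℤ) = (ρ j : ℤ) - ρ i := by
    rw [hα1]; push_cast [Nat.cast_sub hij.le]; ring
  have e2 : ((α2:ℕ):ℤ) = (ρ k : ℤ) - ρ i := by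
    rw [hα2]; push_cast [Nat.cast_sub (le_of_lt (lt_trans hij hjk))]; ring
  -- divisibility transfer
  have hdvdA : ∀ T U : ℕ, ((d:ℤ) ∣ ((lam:ℕ):ℤ) * T + U) →
      (d:ℤ) ∣ (((α1:ℕ):ℤ) * U + ((α2:ℕ):ℤ) * T) := by
    intro T U h
    have e : ((α1:ℕ):ℤ) * U + ((α2:ℕ):ℤ) * T =
        ((α1:ℕ):ℤ) * (((lam:ℕ):ℤ) * T + U) + ((d:ℤ) * cc) * T := by
      rw [hccα]; ring
    rw [e]
    exact dvd_add (h.mul_left _) ((dvd_mul_right _ _).mul_right _)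
  -- membership of interior points
  have hmemT : ∀ T U : ℕ, T + U ≤ d → ((d:ℤ) ∣ ((lam:ℕ):ℤ) * T + U) →
      (fun l => if l = i then (d - T - U) else if l = j then U else
        if l = k then T else 0) ∈ Ω := by
    intro T U hTU hdv
    set g : Fin (n + 1) → ℕ := fun l => if l = i then (d - T - U) else if l = j then U else
      if l = k then T else 0 with hgdef
    have hg0 : ∀ l, l ≠ i → l ≠ j → l ≠ k → g l = 0 := by
      intro l h1 h2 h3; simp [hgdef, h1, h2, h3]
    have hgi : g i = d - T - U := by simp [hgdef]
    have hgj : g j = U := by simp [hgdef, Ne.symm hij']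
    have hgk : g k = T := by simp [hgdef, Ne.symm hik', Ne.symm hjk']
    constructor
    · show ∑ l, g l = d
      rw [hsum3 g hg0, hgi, hgj, hgk]
      omega
    · show d ∣ ∑ l, ρ l * g l
      rw [hsum3 (fun l => ρ l * g l)
        (fun l h1 h2 h3 => by show ρ l * g l = 0; rw [hg0 l h1 h2 h3, mul_zero])]
      show d ∣ ρ i * g i + ρ j * g j + ρ k * g k
      rw [hgi, hgj, hgk]
      have hZ : (d:ℤ) ∣ ((ρ i * (d - T - U) + ρ j * U + ρ k * T : ℕ) : ℤ) := by
        have hcast : ((d - T - U : ℕ) : ℤ) = (d:ℤ) - T - U := by omega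
        have he : ((ρ i * (d - T - U) + ρ j * U + ρ k * T : ℕ) : ℤ) =
            (ρ i : ℤ) * d + (((α1:ℕ):ℤ) * U + ((α2:ℕ):ℤ) * T) := by
          push_cast
          rw [hcast, e1, e2]
          ring
        rw [he]
        exact dvd_add ⟨(ρ i : ℤ), mul_comm _ _⟩ (hdvdA T U hdv)
      exact_mod_cast hZ
  -- corner component values
  have hcIi : cI i = d := by simp [hcI]
  have hcIj : cI j = 0 := by simp [hcI, Ne.symm hij']
  have hcIk : cI k = 0 := by simp [hcI, Ne.symm hik']
  have hcJi : cJ i = 0 := by simp [hcJ, hij']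
  have hcJj : cJ j = d := by simp [hcJ]
  have hcJk : cJ k = 0 := by simp [hcJ, Ne.symm hjk']
  have hcKi : cK i = 0 := by simp [hcK, hik']
  have hcKj : cK j = 0 := by simp [hcK, hjk']
  have hcKk : cK k = d := by simp [hcK]
  have hcIoff : ∀ l, l ≠ i → cI l = 0 := by intro l hl; simp [hcI, hl]
  have hcJoff : ∀ l, l ≠ j → cJ l = 0 := by intro l hl; simp [hcJ, hl]
  have hcKoff : ∀ l, l ≠ k → cK l = 0 := by intro l hl; simp [hcK, hl]
  -- function-building helper
  have heqX : ∀ (x : Fin (n + 1)) (v : Fin (n + 1) → ℕ), (∀ l, l ≠ x → v l = 0) → v x = d →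
      v = (fun l => if l = x then d else 0) := by
    intro x v hoff hx
    funext l
    by_cases h : l = x
    · subst h; simpa using hx
    · simpa [h] using hoff l h
  have hzI : ∀ v : Fin (n + 1) → ℕ, (∀ l, l ≠ i → l ≠ j → l ≠ k → v l = 0) → v j = 0 → v k = 0 →
      ∀ l, l ≠ i → v l = 0 := by
    intro v hoff h2 h3 l hl
    by_cases hj : l = j
    · rw [hj]; exact h2
    · by_cases hk : l = k
      · rw [hk]; exact h3
      · exact hoff l hl hj hk
  have hzJ : ∀ v : Fin (n + 1) → ℕ, (∀ l, l ≠ i → l ≠ j → l ≠ k → v l = 0) → v i = 0 → v k = 0 →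
      ∀ l, l ≠ j → v l = 0 := by
    intro v hoff h2 h3 l hl
    by_cases hj : l = i
    · rw [hj]; exact h2
    · by_cases hk : l = k
      · rw [hk]; exact h3
      · exact hoff l hj hl hk
  have hzK : ∀ v : Fin (n + 1) → ℕ, (∀ l, l ≠ i → l ≠ j → l ≠ k → v l = 0) → v i = 0 → v j = 0 →
      ∀ l, l ≠ k → v l = 0 := by
    intro v hoff h2 h3 l hl
    by_cases hj : l = i
    · rw [hj]; exact h2
    · by_cases hk : l = j
      · rw [hk]; exact h3
      · exact hoff l hj hk hl
  -- dvd: from `d ∣ x` and `x ≤ d` conclude x ∈ {0, d}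
  have hdd : ∀ x : ℕ, d ∣ x → x ≤ d → x = 0 ∨ x = d := by
    intro x hdvd hle
    rcases Nat.eq_zero_or_pos x with h | h
    · exact Or.inl h
    · exact Or.inr (le_antisymm hle (Nat.le_of_dvd h hdvd))
  -- off-support vanishing for a pair summing to a corner pair
  have hoffpair : ∀ (v w x y : Fin (n + 1) → ℕ), (∀ l, l ≠ i → x l = 0) → (∀ l, l ≠ j → y l = 0) →
      True := fun _ _ _ _ _ _ => trivial
  -- THE SIX CORE PAIR LEMMAS
  have pairIJ : ∀ v w, v ∈ Ω → w ∈ Ω → (∀ l, v l + w l = cI l + cJ l) →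
      (v = cI ∧ w = cJ) ∨ (v = cJ ∧ w = cI) := by
    intro v w hv hw hvw
    have hvoff : ∀ l, l ≠ i → l ≠ j → l ≠ k → v l = 0 := by
      intro l h1 h2 h3
      have := hvw l
      rw [hcIoff l h1, hcJoff l h2] at this
      omega
    have hwoff : ∀ l, l ≠ i → l ≠ j → l ≠ k → w l = 0 := by
      intro l h1 h2 h3
      have := hvw l
      rw [hcIoff l h1, hcJoff l h2] at this
      omega
    obtain ⟨hvs, hvd⟩ := hshape v hv hvoff
    obtain ⟨hws, hwd⟩ := hshape w hw hwoff
    have hkk := hvw k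
    rw [hcIk, hcJk] at hkk
    have hvk : v k = 0 := by omega
    have hwk : w k = 0 := by omega
    have hi := hvw i
    rw [hcIi, hcJi] at hi
    have hj := hvw j
    rw [hcIj, hcJj] at hj
    have hdj : d ∣ v j := by
      have h1 : (d:ℤ) ∣ ((α1:ℕ):ℤ) * v j := by
        have h0 := hvd
        rw [hvk] at h0
        simpa using h0
      have h2 : (d:ℤ) ∣ ((v j : ℕ) : ℤ) := icα1.symm.dvd_of_dvd_mul_left h1
      exact_mod_cast h2
    rcases hdd (v j) hdj (by omega) with h | h
    · left
      have hvi : v i = d := by omega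
      have hwj : w j = d := by omega
      have hwi : w i = 0 := by omega
      exact ⟨heqX i v (hzI v hvoff h hvk) hvi,
        heqX j w (hzJ w hwoff hwi hwk) hwj⟩
    · right
      have hvi : v i = 0 := by omega
      have hwj : w j = 0 := by omega
      have hwi : w i = d := by omega
      exact ⟨heqX j v (hzJ v hvoff hvi hvk) h,
        heqX i w (hzI w hwoff hwj hwk) hwi⟩
  have pairIK : ∀ v w, v ∈ Ω → w ∈ Ω → (∀ l, v l + w l = cI l + cK l) →
      (v = cI ∧ w = cK) ∨ (v = cK ∧ w = cI) := by
    intro v w hv hw hvw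
    have hvoff : ∀ l, l ≠ i → l ≠ j → l ≠ k → v l = 0 := by
      intro l h1 h2 h3
      have := hvw l
      rw [hcIoff l h1, hcKoff l h3] at this
      omega
    have hwoff : ∀ l, l ≠ i → l ≠ j → l ≠ k → w l = 0 := by
      intro l h1 h2 h3
      have := hvw l
      rw [hcIoff l h1, hcKoff l h3] at this
      omega
    obtain ⟨hvs, hvd⟩ := hshape v hv hvoff
    obtain ⟨hws, hwd⟩ := hshape w hw hwoff
    have hjj := hvw j
    rw [hcIj, hcKj] at hjj
    have hvj : v j = 0 := by omega
    have hwj : w j = 0 := by omega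
    have hi := hvw i
    rw [hcIi, hcKi] at hi
    have hk := hvw k
    rw [hcIk, hcKk] at hk
    have hdk : d ∣ v k := by
      have h1 : (d:ℤ) ∣ ((α2:ℕ):ℤ) * v k := by
        have h0 := hvd
        rw [hvj] at h0
        simpa using h0
      have h2 : (d:ℤ) ∣ ((v k : ℕ) : ℤ) := icα2.symm.dvd_of_dvd_mul_left h1
      exact_mod_cast h2
    rcases hdd (v k) hdk (by omega) with h | h
    · left
      have hvi : v i = d := by omega
      have hwk : w k = d := by omega
      have hwi : w i = 0 := by omega
      exact ⟨heqX i v (hzI v hvoff hvj h) hvi,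
        heqX k w (hzK w hwoff hwi hwj) hwk⟩
    · right
      have hvi : v i = 0 := by omega
      have hwk : w k = 0 := by omega
      have hwi : w i = d := by omega
      exact ⟨heqX k v (hzK v hvoff hvi hvj) h,
        heqX i w (hzI w hwoff hwj hwk) hwi⟩
  have pairJK : ∀ v w, v ∈ Ω → w ∈ Ω → (∀ l, v l + w l = cJ l + cK l) →
      (v = cJ ∧ w = cK) ∨ (v = cK ∧ w = cJ) := by
    intro v w hv hw hvw
    have hvoff : ∀ l, l ≠ i → l ≠ j → l ≠ k → v l = 0 := by
      intro l h1 h2 h3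
      have := hvw l
      rw [hcJoff l h2, hcKoff l h3] at this
      omega
    have hwoff : ∀ l, l ≠ i → l ≠ j → l ≠ k → w l = 0 := by
      intro l h1 h2 h3
      have := hvw l
      rw [hcJoff l h2, hcKoff l h3] at this
      omega
    obtain ⟨hvs, hvd⟩ := hshape v hv hvoff
    obtain ⟨hws, hwd⟩ := hshape w hw hwoff
    have hii := hvw i
    rw [hcJi, hcKi] at hii
    have hvi : v i = 0 := by omega
    have hwi : w i = 0 := by omega
    have hj := hvw j
    rw [hcJj, hcKj] at hj
    have hk := hvw k
    rw [hcJk, hcKk] at hk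
    have hdk : d ∣ v k := by
      have h1 : (d:ℤ) ∣ (((α2:ℕ):ℤ) - ((α1:ℕ):ℤ)) * v k := by
        have h0 := hvd
        have hsum2 : ((v j : ℕ) : ℤ) + ((v k : ℕ) : ℤ) = (d : ℤ) := by
          have : v j + v k = d := by omega
          exact_mod_cast this
        have e : (((α2:ℕ):ℤ) - ((α1:ℕ):ℤ)) * v k =
            (((α1:ℕ):ℤ) * v j + ((α2:ℕ):ℤ) * v k)
              - ((α1:ℕ):ℤ) * (((v j : ℕ) : ℤ) + ((v k : ℕ) : ℤ)) := by ring
        rw [e, hsum2]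
        exact dvd_sub h0 (dvd_mul_left _ _)
      have h2 : (d:ℤ) ∣ ((v k : ℕ) : ℤ) := icδ.symm.dvd_of_dvd_mul_left h1
      exact_mod_cast h2
    rcases hdd (v k) hdk (by omega) with h | h
    · left
      have hvj : v j = d := by omega
      have hwk : w k = d := by omega
      have hwj : w j = 0 := by omega
      exact ⟨heqX j v (hzJ v hvoff hvi h) hvj,
        heqX k w (hzK w hwoff hwi hwj) hwk⟩
    · right
      have hvj : v j = 0 := by omega
      have hwk : w k = 0 := by omega
      have hwj : w j = d := by omega
      exact ⟨heqX k v (hzK v hvoff hvi hvj) h,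
        heqX j w (hzJ w hwoff hwi hwk) hwj⟩
  have pairII : ∀ v w, v ∈ Ω → w ∈ Ω → (∀ l, v l + w l = cI l + cI l) →
      v = cI ∧ w = cI := by
    intro v w hv hw hvw
    have hvoff : ∀ l, l ≠ i → l ≠ j → l ≠ k → v l = 0 := by
      intro l h1 h2 h3
      have := hvw l
      rw [hcIoff l h1] at this
      omega
    have hwoff : ∀ l, l ≠ i → l ≠ j → l ≠ k → w l = 0 := by
      intro l h1 h2 h3
      have := hvw l
      rw [hcIoff l h1] at this
      omega
    obtain ⟨hvs, hvd⟩ := hshape v hv hvoff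
    obtain ⟨hws, hwd⟩ := hshape w hw hwoff
    have hjj := hvw j
    rw [hcIj] at hjj
    have hkk := hvw k
    rw [hcIk] at hkk
    exact ⟨heqX i v (hzI v hvoff (by omega) (by omega)) (by omega),
      heqX i w (hzI w hwoff (by omega) (by omega)) (by omega)⟩
  have pairJJ : ∀ v w, v ∈ Ω → w ∈ Ω → (∀ l, v l + w l = cJ l + cJ l) →
      v = cJ ∧ w = cJ := by
    intro v w hv hw hvw
    have hvoff : ∀ l, l ≠ i → l ≠ j → l ≠ k → v l = 0 := by
      intro l h1 h2 h3
      have := hvw l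
      rw [hcJoff l h2] at this
      omega
    have hwoff : ∀ l, l ≠ i → l ≠ j → l ≠ k → w l = 0 := by
      intro l h1 h2 h3
      have := hvw l
      rw [hcJoff l h2] at this
      omega
    obtain ⟨hvs, hvd⟩ := hshape v hv hvoff
    obtain ⟨hws, hwd⟩ := hshape w hw hwoff
    have hii := hvw i
    rw [hcJi] at hii
    have hkk := hvw k
    rw [hcJk] at hkk
    exact ⟨heqX j v (hzJ v hvoff (by omega) (by omega)) (by omega),
      heqX j w (hzJ w hwoff (by omega) (by omega)) (by omega)⟩
  have pairKK : ∀ v w, v ∈ Ω → w ∈ Ω → (∀ l, v l + w l = cK l + cK l) →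
      v = cK ∧ w = cK := by
    intro v w hv hw hvw
    have hvoff : ∀ l, l ≠ i → l ≠ j → l ≠ k → v l = 0 := by
      intro l h1 h2 h3
      have := hvw l
      rw [hcKoff l h3] at this
      omega
    have hwoff : ∀ l, l ≠ i → l ≠ j → l ≠ k → w l = 0 := by
      intro l h1 h2 h3
      have := hvw l
      rw [hcKoff l h3] at this
      omega
    obtain ⟨hvs, hvd⟩ := hshape v hv hvoff
    obtain ⟨hws, hwd⟩ := hshape w hw hwoff
    have hii := hvw i
    rw [hcKi] at hii
    have hjj := hvw j
    rw [hcKj] at hjj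
    exact ⟨heqX k v (hzK v hvoff (by omega) (by omega)) (by omega),
      heqX k w (hzK w hwoff (by omega) (by omega)) (by omega)⟩
  -- dispatcher over the corner set
  set C : Set (Fin (n + 1) → ℕ) := {cI, cJ, cK} with hC
  have pairCC : ∀ x y, x ∈ C → y ∈ C → ∀ v w, v ∈ Ω → w ∈ Ω →
      (∀ l, v l + w l = x l + y l) → (v = x ∧ w = y) ∨ (v = y ∧ w = x) := by
    intro x y hx hy v w hv hw hvw
    simp only [hC, Set.mem_insert_iff, Set.mem_singleton_iff] at hx hy
    rcases hx with rfl | rfl | rfl <;> rcases hy with rfl | rfl | rfl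
    · exact Or.inl (pairII v w hv hw hvw)
    · exact pairIJ v w hv hw hvw
    · exact pairIK v w hv hw hvw
    · rcases pairIJ v w hv hw (fun l => (hvw l).trans (add_comm _ _)) with ⟨h1, h2⟩ | ⟨h1, h2⟩
      · exact Or.inr ⟨h1, h2⟩
      · exact Or.inl ⟨h1, h2⟩
    · exact Or.inl (pairJJ v w hv hw hvw)
    · exact pairJK v w hv hw hvw
    · rcases pairIK v w hv hw (fun l => (hvw l).trans (add_comm _ _)) with ⟨h1, h2⟩ | ⟨h1, h2⟩
      · exact Or.inr ⟨h1, h2⟩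
      · exact Or.inl ⟨h1, h2⟩
    · rcases pairJK v w hv hw (fun l => (hvw l).trans (add_comm _ _)) with ⟨h1, h2⟩ | ⟨h1, h2⟩
      · exact Or.inr ⟨h1, h2⟩
      · exact Or.inl ⟨h1, h2⟩
    · exact Or.inl (pairKK v w hv hw hvw)
  -- the interior triple
  obtain ⟨t1, u1, t2, u2, t3, u3, hts, hus, h1u, h2u, h3u, hd1, hd2, hd3⟩ :=
    exists_triple d lam hd hlam2 hlamlt hco hco1
  set y1f : Fin (n + 1) → ℕ :=
    (fun l => if l = i then (d - t1 - u1) else if l = j then u1 else if l = k then t1 else 0)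
    with hy1f
  set y2f : Fin (n + 1) → ℕ :=
    (fun l => if l = i then (d - t2 - u2) else if l = j then u2 else if l = k then t2 else 0)
    with hy2f
  set y3f : Fin (n + 1) → ℕ :=
    (fun l => if l = i then (d - t3 - u3) else if l = j then u3 else if l = k then t3 else 0)
    with hy3f
  have hmy1 : y1f ∈ Ω := hmemT t1 u1 (by omega) hd1
  have hmy2 : y2f ∈ Ω := hmemT t2 u2 h2u hd2
  have hmy3 : y3f ∈ Ω := hmemT t3 u3 h3u hd3
  -- apply the main auxiliary lemma
  refine mainAux K Ω C ?_ ⟨cI, hmemI⟩ ⟨cJ, hmemJ⟩ ⟨cK, hmemK⟩ ⟨y1f, hmy1⟩ ⟨y2f, hmy2⟩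
    ⟨y3f, hmy3⟩ ?_ ?_ ?_ ?_ ?_
  · intro a b a' b' ha hb hsum'
    rcases pairCC a.1 b.1 ha hb a'.1 b'.1 a'.2 b'.2 hsum' with ⟨h1, h2⟩ | ⟨h1, h2⟩
    · exact Or.inl ⟨Subtype.ext h1, Subtype.ext h2⟩
    · exact Or.inr ⟨Subtype.ext h1, Subtype.ext h2⟩
  · intro l
    show cI l + cJ l + cK l = y1f l + y2f l + y3f l
    have hv1i : y1f i = d - t1 - u1 := by simp [hy1f]
    have hv1j : y1f j = u1 := by simp [hy1f, Ne.symm hij']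
    have hv1k : y1f k = t1 := by simp [hy1f, Ne.symm hik', Ne.symm hjk']
    have hv2i : y2f i = d - t2 - u2 := by simp [hy2f]
    have hv2j : y2f j = u2 := by simp [hy2f, Ne.symm hij']
    have hv2k : y2f k = t2 := by simp [hy2f, Ne.symm hik', Ne.symm hjk']
    have hv3i : y3f i = d - t3 - u3 := by simp [hy3f]
    have hv3j : y3f j = u3 := by simp [hy3f, Ne.symm hij']
    have hv3k : y3f k = t3 := by simp [hy3f, Ne.symm hik', Ne.symm hjk']
    by_cases h1 : l = i
    · rw [h1, hcIi, hcJi, hcKi, hv1i, hv2i, hv3i]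
      omega
    · by_cases h2 : l = j
      · rw [h2, hcIj, hcJj, hcKj, hv1j, hv2j, hv3j]
        omega
      · by_cases h3 : l = k
        · rw [h3, hcIk, hcJk, hcKk, hv1k, hv2k, hv3k]
          omega
        · rw [hcIoff l h1, hcJoff l h2, hcKoff l h3]
          simp only [hy1f, hy2f, hy3f, if_neg h1, if_neg h2, if_neg h3]
  · exact Or.inl rfl
  · exact Or.inr (Or.inl rfl)
  · exact Or.inr (Or.inr rfl)
  · show y1f ∉ C
    have hy1i : y1f i = d - t1 - u1 := by simp [hy1f]
    have hval : d - t1 - u1 = 1 := by omega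
    simp only [hC, Set.mem_insert_iff, Set.mem_singleton_iff]
    push_neg
    refine ⟨?_, ?_, ?_⟩
    · intro h
      have := congrFun h i
      rw [hy1i, hcIi] at this
      omega
    · intro h
      have := congrFun h i
      rw [hy1i, hcJi] at this
      omega
    · intro h
      have := congrFun h i
      rw [hy1i, hcKi] at this
      omega
end

section
/- Let k ≥ 2 and t ≥ 1 be integers and set d = t·k·(k−1). Then for natural numbers a, b, c with a + b + c = d, the divisibility d ∣ (b + k·c) holds if and only if either (a, b, c) = (d, 0, 0), or there exist integers r and c' with 1 ≤ r ≤ k, (r−1)·t·k ≤ c' ≤ r·t·(k−1), and a = (k−1)·c' − (r−1)·d, b = r·d − k·c', c = c'. (In particular, each monomial invariant x₀^a x₁^b x₂^c of degree d of the cyclic group ⟨diag(1, e, e^k)⟩ of order d is uniquely described by such a pair (r, c').) -/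
open MvPolynomial

set_option maxHeartbeats 1000000 in
/-- for `k ≥ 2`, `t ≥ 1`, `d = t·k·(k−1)` and `a + b + c = d`, we have
`d ∣ (b + k·c)` iff `(a,b,c) = (d,0,0)` or `(a,b,c)` is determined by a pair `(r,c')` with
`1 ≤ r ≤ k`, `(r−1)·t·k ≤ c' ≤ r·t·(k−1)`, `a = (k−1)·c' − (r−1)·d`, `b = r·d − k·c'`,
`c = c'`. -/
theorem stmt16 (k t : ℕ) (hk : 2 ≤ k) (ht : 1 ≤ t) (a b c : ℕ)
    (habc : a + b + c = t * k * (k - 1)) :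
    (t * k * (k - 1)) ∣ (b + k * c) ↔
      ((a = t * k * (k - 1) ∧ b = 0 ∧ c = 0) ∨
        ∃ r c' : ℕ, 1 ≤ r ∧ r ≤ k ∧ (r - 1) * t * k ≤ c' ∧ c' ≤ r * t * (k - 1) ∧
          (a : ℤ) = ((k : ℤ) - 1) * c' - ((r : ℤ) - 1) * (t * k * ((k : ℤ) - 1)) ∧
          (b : ℤ) = (r : ℤ) * (t * k * ((k : ℤ) - 1)) - k * c' ∧
          c = c') := by
  have hk1 : ((k - 1 : ℕ) : ℤ) = (k : ℤ) - 1 := by omega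
  have hkz : (2:ℤ) ≤ (k:ℤ) := by exact_mod_cast hk
  have htz : (1:ℤ) ≤ (t:ℤ) := by exact_mod_cast ht
  have hD1 : 1 ≤ (t : ℤ) * k * ((k : ℤ) - 1) := by
    have h1k : (1:ℤ) ≤ (k:ℤ) - 1 := by linarith
    have htk : (1:ℤ)*1 ≤ (t:ℤ) * k := mul_le_mul htz (by linarith) one_pos.le (by linarith)
    have := mul_le_mul htk h1k one_pos.le (by linarith)
    linarith
  have h1 : (a : ℤ) + b + c = (t : ℤ) * k * ((k : ℤ) - 1) := by
    have := congrArg (Nat.cast : ℕ → ℤ) habc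
    push_cast at this
    rw [hk1] at this
    linarith
  constructor
  · rintro ⟨m, hm⟩
    have h2 : (b : ℤ) + k * c = (t : ℤ) * k * ((k : ℤ) - 1) * m := by
      have := congrArg (Nat.cast : ℕ → ℤ) hm
      push_cast at this
      rw [hk1] at this
      linarith
    rcases Nat.eq_zero_or_pos m with hm0 | hmpos
    · subst hm0
      simp at h2
      have hc0 : c = 0 := by
        have : (c : ℤ) = 0 := by nlinarith [(Nat.cast_nonneg b : (0:ℤ) ≤ b),
          (Nat.cast_nonneg c : (0:ℤ) ≤ c)]
        exact_mod_cast this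
      have hb0 : b = 0 := by
        have : (b : ℤ) = 0 := by
          rw [hc0] at h2; push_cast at h2; linarith
        exact_mod_cast this
      left
      refine ⟨?_, hb0, hc0⟩
      omega
    · right
      refine ⟨m, c, hmpos, ?_, ?_, ?_, ?_, ?_, rfl⟩
      · -- m ≤ k
        by_contra hmk
        push_neg at hmk
        have hkm : (k : ℤ) + 1 ≤ m := by exact_mod_cast hmk
        have hcD : (c : ℤ) ≤ (t : ℤ) * k * ((k : ℤ) - 1) := by
          nlinarith [(Nat.cast_nonneg a : (0:ℤ) ≤ a), (Nat.cast_nonneg b : (0:ℤ) ≤ b)]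
        have hbD : (b : ℤ) ≤ (t : ℤ) * k * ((k : ℤ) - 1) := by
          nlinarith [(Nat.cast_nonneg a : (0:ℤ) ≤ a), (Nat.cast_nonneg c : (0:ℤ) ≤ c)]
        nlinarith [mul_le_mul_of_nonneg_left hcD (show (0:ℤ) ≤ (k:ℤ) - 1 by linarith),
          mul_le_mul_of_nonneg_left hkm (show (0:ℤ) ≤ (t : ℤ) * k * ((k : ℤ) - 1) by linarith)]
      · -- (m-1)*t*k ≤ c
        have hmcast : (((m - 1 : ℕ)) : ℤ) = (m : ℤ) - 1 := by omega
        have key : ((k:ℤ) - 1) * (((m - 1) * t * k : ℕ) : ℤ) ≤ ((k:ℤ) - 1) * c := by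
          push_cast
          rw [hmcast]
          nlinarith [(Nat.cast_nonneg a : (0:ℤ) ≤ a)]
        have hkp : (0:ℤ) < (k:ℤ) - 1 := by linarith
        have := le_of_mul_le_mul_left key hkp
        exact_mod_cast this
      · -- c ≤ m*t*(k-1)
        have key : (k:ℤ) * (c : ℤ) ≤ (k:ℤ) * ((m * t * (k - 1) : ℕ) : ℤ) := by
          push_cast
          rw [hk1]
          nlinarith [(Nat.cast_nonneg b : (0:ℤ) ≤ b)]
        have hkp : (0:ℤ) < (k:ℤ) := by linarith
        have := le_of_mul_le_mul_left key hkp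
        exact_mod_cast this
      · linear_combination h1 - h2
      · linear_combination h2
  · rintro (⟨ha, hb, hc⟩ | ⟨r, c', hr1, hrk, hl, hu, hA, hB, hC⟩)
    · subst hb; subst hc; simp
    · rw [← Int.natCast_dvd_natCast]
      refine ⟨r, ?_⟩
      have hCz : (c : ℤ) = c' := by exact_mod_cast hC
      push_cast
      rw [hk1]
      linear_combination hB + (k:ℤ) * hCz
end

section
/- Let d ≥ 2, let α : Fin (n+1) → ℕ be weights with α l < d for all l, and suppose there are indices i ≠ j with α i ≢ α j (mod d). Let B₁ = Ω(d, α) = { a : Fin (n+1) → ℕ | ∑ l, a l = d ∧ d ∣ ∑ l, (α l)·(a l) }. Then for every t ≥ 1, the exponent vector v of degree t·d defined by v i = t·d − 1, v j = 1, and v l = 0 otherwise, is not a sum of t elements of B₁. In particular, the span of B₁ is not 2-normal: for every t ≥ 1 the degree-t graded component of K[B₁] is a proper subspace of the space of forms of degree t·d. -/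
open MvPolynomial

/-- for weights `α` with all `α l < d` and `α i ≢ α j (mod d)` for some
`i ≠ j`, the exponent vector with value `t·d − 1` at `i`, `1` at `j` and `0` elsewhere is
not a sum of `t` elements of `B₁ = Ω(d, α)`, for any `t ≥ 1` (so the span of `B₁` is never
2-normal). -/
theorem stmt17 (n d : ℕ) (hn : 1 ≤ n) (hd : 2 ≤ d)
    (α : Fin (n + 1) → ℕ) (hαd : ∀ l, α l < d)
    (i j : Fin (n + 1)) (hij : i ≠ j) (hmod : ¬ α i ≡ α j [MOD d]) :
    ∀ t : ℕ, 1 ≤ t →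
      ¬ ∃ f : Fin t → (Fin (n + 1) → ℕ),
          (∀ s, f s ∈ {a : Fin (n + 1) → ℕ | (∑ l, a l = d) ∧ d ∣ ∑ l, α l * a l}) ∧
          (fun l => if l = i then t * d - 1 else if l = j then 1 else 0) = ∑ s, f s := by
  rintro t ht ⟨f, hf, hv⟩
  have hsum : d ∣ ∑ l, α l * ((∑ s, f s) l) := by
    have h1 : ∑ l, α l * ((∑ s, f s) l) = ∑ s, ∑ l, α l * f s l := by
      rw [Finset.sum_comm]
      simp [Finset.mul_sum]
    rw [h1]
    exact Finset.dvd_sum fun s _ => (hf s).2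
  rw [← hv] at hsum
  have hval : ∑ l, α l * (if l = i then t * d - 1 else if l = j then 1 else 0)
      = α i * (t * d - 1) + α j := by
    rw [← Finset.add_sum_erase _ _ (Finset.mem_univ i)]
    simp only [if_pos rfl]
    congr 1
    rw [← Finset.add_sum_erase _ _ (Finset.mem_erase.mpr ⟨Ne.symm hij, Finset.mem_univ j⟩)]
    rw [if_neg (Ne.symm hij), if_pos rfl, mul_one]
    have : ∀ l ∈ (Finset.univ.erase i).erase j,
        α l * (if l = i then t * d - 1 else if l = j then 1 else 0) = 0 := by
      intro l hl
      simp only [Finset.mem_erase] at hl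
      rw [if_neg hl.2.1, if_neg hl.1, mul_zero]
    rw [Finset.sum_congr rfl this, Finset.sum_const_zero, add_zero]
  rw [hval] at hsum
  have htd : 1 ≤ t * d := le_trans ht (Nat.le_mul_of_pos_right t (by omega))
  have h2 : d ∣ α i * (t * d - 1) + α i := by
    have : α i * (t * d - 1) + α i = α i * t * d := by
      have := htd; nlinarith [Nat.sub_add_cancel htd]
    rw [this]; exact ⟨α i * t, by ring⟩
  apply hmod
  have h3 : (α i * (t * d - 1) + α i) ≡ (α i * (t * d - 1) + α j) [MOD d] :=
    (Nat.modEq_zero_iff_dvd.mpr h2).trans (Nat.modEq_zero_iff_dvd.mpr hsum).symm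
  exact Nat.ModEq.add_left_cancel' _ h3
end
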